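/- arXiv:1602.05986 — 6 statements merged into one kernel-verified Lean document; each statement's English description precedes it below -/
import Mathlib

section
/- Let λ > 0, p ∈ [0,1], let N be Poisson distributed with rate λ, and conditionally on N = n let K be binomially distributed with parameters n and p (so the joint law is the bind of the Poisson(λ) PMF with the binomial kernel). Then K and N − K are independent, K is Poisson distributed with rate λp, and N − K is Poisson distributed with rate λ(1−p); that is, P(K = a, N − K = b) = exp(−λp)(λp)^a/a! · exp(−λ(1−p))(λ(1−p))^b/b! for all a, b ∈ ℕ. -/
open MeasureTheory ProbabilityTheory ENNReal

lemma tsum_ofReal_poisson (r : ℝ) (hr : 0 ≤ r) :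
    (∑' n : ℕ, ENNReal.ofReal (Real.exp (-r) * r ^ n / (Nat.factorial n))) = 1 := by
  have h := poissonPMFRealSum ⟨r, hr⟩
  have hsum : Summable (fun n : ℕ => Real.exp (-r) * r ^ n / (Nat.factorial n)) := by
    have := h.summable
    exact this
  have htsum : (∑' n : ℕ, Real.exp (-r) * r ^ n / (Nat.factorial n)) = 1 := by
    have := h.tsum_eq
    exact this
  rw [← ENNReal.ofReal_tsum_of_nonneg (fun n => by positivity) hsum, htsum, ENNReal.ofReal_one]

lemma poisson_real_id (lam p : ℝ) (a b : ℕ) :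
    (Real.exp (-lam) * lam ^ (a + b) / (Nat.factorial (a + b))) *
      (((a + b).choose a : ℝ) * p ^ a * (1 - p) ^ b)
    = (Real.exp (-(lam * p)) * (lam * p) ^ a / (Nat.factorial a)) *
      (Real.exp (-(lam * (1 - p))) * (lam * (1 - p)) ^ b / (Nat.factorial b)) := by
  have hexp : Real.exp (-lam) = Real.exp (-(lam * p)) * Real.exp (-(lam * (1 - p))) := by
    rw [← Real.exp_add]; ring_nf
  have hch : (((a + b).choose a : ℝ)) * (Nat.factorial a) * (Nat.factorial b) =
      (Nat.factorial (a + b)) := by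
    exact_mod_cast congrArg (Nat.cast : ℕ → ℝ)
      (by simpa using Nat.choose_mul_factorial_mul_factorial (Nat.le_add_right a b))
  have hfa : (Nat.factorial a : ℝ) ≠ 0 := by exact_mod_cast (Nat.factorial_pos a).ne'
  have hfb : (Nat.factorial b : ℝ) ≠ 0 := by exact_mod_cast (Nat.factorial_pos b).ne'
  have hfab : (Nat.factorial (a + b) : ℝ) ≠ 0 := by exact_mod_cast (Nat.factorial_pos _).ne'
  rw [hexp, mul_pow, mul_pow, pow_add]
  field_simp
  rw [← hch]; ring

/-- **Poisson thinning, joint version.**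
If `N` is Poisson with rate `lam > 0` and, conditionally on `N = n`, `K` is binomial with
parameters `n` and `p` (the joint law is the bind of the Poisson pmf with the binomial kernel),
then `K` and `N - K` are independent, `K` is Poisson with rate `lam * p` and `N - K` is
Poisson with rate `lam * (1 - p)`:
`P(K = a, N - K = b) = e^{-λp}(λp)^a/a! ⬝ e^{-λ(1-p)}(λ(1-p))^b/b!` for all `a b : ℕ`. -/
theorem poisson_binomial_thinning_joint
    {Ω : Type*} [MeasureSpace Ω] [IsProbabilityMeasure (ℙ : Measure Ω)]
    (N K : Ω → ℕ) (hNmeas : Measurable N) (hKmeas : Measurable K)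
    (hle : ∀ ω, K ω ≤ N ω)
    (lam p : ℝ) (hlam : 0 < lam) (hp0 : 0 ≤ p) (hp1 : p ≤ 1)
    (hN : ∀ n : ℕ, ℙ {ω | N ω = n} =
      ENNReal.ofReal (Real.exp (-lam) * lam ^ n / (Nat.factorial n)))
    (hK : ∀ n a : ℕ, a ≤ n → ℙ ({ω | K ω = a} ∩ {ω | N ω = n}) =
      ℙ {ω | N ω = n} *
        ENNReal.ofReal ((n.choose a : ℝ) * p ^ a * (1 - p) ^ (n - a))) :
    (IndepFun K (fun ω => N ω - K ω) ℙ) ∧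
    (∀ a : ℕ, ℙ {ω | K ω = a} =
      ENNReal.ofReal (Real.exp (-(lam * p)) * (lam * p) ^ a / (Nat.factorial a))) ∧
    (∀ b : ℕ, ℙ {ω | N ω - K ω = b} =
      ENNReal.ofReal (Real.exp (-(lam * (1 - p))) * (lam * (1 - p)) ^ b / (Nat.factorial b))) ∧
    (∀ a b : ℕ, ℙ ({ω | K ω = a} ∩ {ω | N ω - K ω = b}) =
      ENNReal.ofReal (Real.exp (-(lam * p)) * (lam * p) ^ a / (Nat.factorial a)) *
      ENNReal.ofReal
        (Real.exp (-(lam * (1 - p))) * (lam * (1 - p)) ^ b / (Nat.factorial b))) := by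
  set M : Ω → ℕ := fun ω => N ω - K ω with hM
  have hMmeas : Measurable M := hNmeas.sub hKmeas
  set f : ℕ → ℝ≥0∞ := fun a =>
    ENNReal.ofReal (Real.exp (-(lam * p)) * (lam * p) ^ a / (Nat.factorial a)) with hf
  set g : ℕ → ℝ≥0∞ := fun b =>
    ENNReal.ofReal (Real.exp (-(lam * (1 - p))) * (lam * (1 - p)) ^ b / (Nat.factorial b))
    with hg
  -- joint probability
  have hjoint : ∀ a b : ℕ, ℙ ({ω | K ω = a} ∩ {ω | M ω = b}) = f a * g b := by
    intro a b
    have hset : {ω | K ω = a} ∩ {ω | M ω = b} = {ω | K ω = a} ∩ {ω | N ω = a + b} := by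
      ext ω
      have := hle ω
      simp only [Set.mem_inter_iff, Set.mem_setOf_eq, hM]
      constructor <;> rintro ⟨h1, h2⟩ <;> exact ⟨h1, by omega⟩
    rw [hset, hK (a + b) a (Nat.le_add_right a b), hN (a + b)]
    rw [← ENNReal.ofReal_mul (by positivity), Nat.add_sub_cancel_left]
    rw [poisson_real_id lam p a b, hf, hg]
    exact ENNReal.ofReal_mul (by positivity)
  have hsf : (∑' a : ℕ, f a) = 1 := tsum_ofReal_poisson (lam * p) (by positivity)
  have hsg : (∑' b : ℕ, g b) = 1 :=
    tsum_ofReal_poisson (lam * (1 - p)) (by nlinarith)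
  have hmeasK : ∀ a : ℕ, MeasurableSet {ω | K ω = a} := fun a =>
    hKmeas (measurableSet_singleton a)
  have hmeasM : ∀ b : ℕ, MeasurableSet {ω | M ω = b} := fun b =>
    hMmeas (measurableSet_singleton b)
  -- marginal of K
  have hKa : ∀ a : ℕ, ℙ {ω | K ω = a} = f a := by
    intro a
    have hcover : {ω | K ω = a} = ⋃ b : ℕ, ({ω | K ω = a} ∩ {ω | M ω = b}) := by
      ext ω; simp
    have hdisj : Pairwise (Function.onFun Disjoint
        fun b => {ω | K ω = a} ∩ {ω | M ω = b}) := by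
      intro i j hij
      rw [Function.onFun, Set.disjoint_left]
      rintro ω ⟨_, h1⟩ ⟨_, h2⟩
      exact hij (h1 ▸ h2 ▸ rfl)
    rw [hcover, measure_iUnion hdisj (fun b => (hmeasK a).inter (hmeasM b))]
    simp_rw [hjoint a]
    rw [ENNReal.tsum_mul_left, hsg, mul_one]
  -- marginal of M
  have hMb : ∀ b : ℕ, ℙ {ω | M ω = b} = g b := by
    intro b
    have hcover : {ω | M ω = b} = ⋃ a : ℕ, ({ω | K ω = a} ∩ {ω | M ω = b}) := by
      ext ω; simp
    have hdisj : Pairwise (Function.onFun Disjoint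
        fun a => {ω | K ω = a} ∩ {ω | M ω = b}) := by
      intro i j hij
      rw [Function.onFun, Set.disjoint_left]
      rintro ω ⟨h1, _⟩ ⟨h2, _⟩
      exact hij (h1 ▸ h2 ▸ rfl)
    rw [hcover, measure_iUnion hdisj (fun a => (hmeasK a).inter (hmeasM b))]
    simp_rw [hjoint]
    rw [ENNReal.tsum_mul_right, hsf, one_mul]
  -- independence
  have hindep : IndepFun K M ℙ := by
    rw [indepFun_iff_map_prod_eq_prod_map_map hKmeas.aemeasurable hMmeas.aemeasurable]
    haveI : IsProbabilityMeasure (Measure.map K ℙ) :=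
      Measure.isProbabilityMeasure_map hKmeas.aemeasurable
    haveI : IsProbabilityMeasure (Measure.map M ℙ) :=
      Measure.isProbabilityMeasure_map hMmeas.aemeasurable
    apply MeasureTheory.Measure.ext_of_singleton
    rintro ⟨a, b⟩
    rw [Measure.map_apply (hKmeas.prodMk hMmeas) (measurableSet_singleton _)]
    have hpre : (fun ω => (K ω, M ω)) ⁻¹' {(a, b)} = {ω | K ω = a} ∩ {ω | M ω = b} := by
      ext ω; simp [Prod.ext_iff]
    rw [hpre, hjoint a b, ← Set.singleton_prod_singleton, Measure.prod_prod,
      Measure.map_apply hKmeas (measurableSet_singleton _),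
      Measure.map_apply hMmeas (measurableSet_singleton _)]
    have h1 : K ⁻¹' {a} = {ω | K ω = a} := rfl
    have h2 : M ⁻¹' {b} = {ω | M ω = b} := rfl
    rw [h1, h2, hKa a, hMb b]
  exact ⟨hindep, hKa, hMb, hjoint⟩
end

section
/- Let G_1, …, G_m be independent random variables with G_i Gumbel distributed with location μ_i ∈ ℝ, and let G* = max_{1≤i≤m} G_i and I* = argmax_{1≤i≤m} G_i (the argmax is almost surely unique). Then for every k ∈ {1,…,m} and g ∈ ℝ, P(I* = k, G* ≤ g) = (exp(μ_k)/∑_{j=1}^m exp(μ_j)) · exp(−exp(−g)·∑_{j=1}^m exp(μ_j)). In particular P(I* = k) = exp(μ_k)/∑_{j=1}^m exp(μ_j), and G* and I* are independent. -/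
open MeasureTheory ProbabilityTheory Finset Set Filter Real Topology

section auxlemmas

lemma gumbel_hasDerivAt (c t : ℝ) :
    HasDerivAt (fun t => Real.exp (-(c * Real.exp (-t))))
      (c * Real.exp (-t) * Real.exp (-(c * Real.exp (-t)))) t := by
  have h1 : HasDerivAt (fun t : ℝ => -t) (-1) t := (hasDerivAt_id t).neg
  have h2 : HasDerivAt (fun t : ℝ => Real.exp (-t)) (Real.exp (-t) * (-1)) t :=
    (Real.hasDerivAt_exp (-t)).comp t h1
  have h3 : HasDerivAt (fun t : ℝ => -(c * Real.exp (-t))) (-(c * (Real.exp (-t) * (-1)))) t :=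
    (h2.const_mul c).neg
  have h4 := (Real.hasDerivAt_exp (-(c * Real.exp (-t)))).comp t h3
  exact h4.congr_deriv (by ring)

lemma gumbel_tendsto_atBot {c : ℝ} (hc : 0 < c) :
    Tendsto (fun t => Real.exp (-(c * Real.exp (-t)))) atBot (𝓝 0) := by
  apply Real.tendsto_exp_atBot.comp
  apply Filter.tendsto_neg_atBot_iff.mpr
  exact (Real.tendsto_exp_atTop.comp tendsto_neg_atBot_atTop).const_mul_atTop hc

lemma gumbel_tendsto_atTop {c : ℝ} (hc : 0 < c) :
    Tendsto (fun u => Real.exp (-(c * Real.exp u))) atTop (𝓝 0) := by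
  apply Real.tendsto_exp_atBot.comp
  apply Filter.tendsto_neg_atBot_iff.mpr
  exact Real.tendsto_exp_atTop.const_mul_atTop hc

lemma gumbel_integrableOn {c : ℝ} (hc : 0 < c) (g : ℝ) :
    IntegrableOn (fun t => c * Real.exp (-t) * Real.exp (-(c * Real.exp (-t)))) (Iic g) := by
  have hderiv : ∀ u ∈ Ici (-g), HasDerivAt (fun u => Real.exp (-(c * Real.exp u)))
      (-(c * Real.exp u * Real.exp (-(c * Real.exp u)))) u := by
    intro u _
    have := gumbel_hasDerivAt c (-u)
    have h := this.comp u ((hasDerivAt_id u).neg)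
    simp only [Function.comp_def, neg_neg] at h
    exact h.congr_deriv (by ring)
  have hderiv' : ∀ u ∈ Ici (-g), HasDerivAt (fun u => -Real.exp (-(c * Real.exp u)))
      (c * Real.exp u * Real.exp (-(c * Real.exp u))) u := by
    intro u hu
    exact (hderiv u hu).neg.congr_deriv (neg_neg _)
  have hint : IntegrableOn (fun u => c * Real.exp u * Real.exp (-(c * Real.exp u))) (Ioi (-g)) := by
    apply integrableOn_Ioi_deriv_of_nonneg' hderiv'
    · intro x _
      positivity
    · simpa using ((gumbel_tendsto_atTop hc).neg)
  have h2 : IntegrableOn ((fun u => c * Real.exp u * Real.exp (-(c * Real.exp u))) ∘ Neg.neg)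
      (Neg.neg ⁻¹' (Ioi (-g))) (volume : Measure ℝ) :=
    (MeasurePreserving.integrableOn_comp_preimage (Measure.measurePreserving_neg _)
      (Homeomorph.neg ℝ).measurableEmbedding).2 hint
  have hset : (Neg.neg ⁻¹' (Ioi (-g)) : Set ℝ) = Iio g := by
    ext x; simp [neg_lt]
  rw [hset] at h2
  have h3 : IntegrableOn (fun t => c * Real.exp (-t) * Real.exp (-(c * Real.exp (-t)))) (Iio g) := by
    simpa [Function.comp_def] using h2
  exact h3.congr_set_ae Iio_ae_eq_Iic.symm

lemma gumbel_integral {c : ℝ} (hc : 0 < c) (g : ℝ) :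
    ∫ t in Iic g, c * Real.exp (-t) * Real.exp (-(c * Real.exp (-t))) =
      Real.exp (-(c * Real.exp (-g))) := by
  have := integral_Iic_of_hasDerivAt_of_tendsto' (a := g)
    (f := fun t => Real.exp (-(c * Real.exp (-t))))
    (f' := fun t => c * Real.exp (-t) * Real.exp (-(c * Real.exp (-t))))
    (fun x _ => gumbel_hasDerivAt c x) (gumbel_integrableOn hc g) (gumbel_tendsto_atBot hc)
  simpa using this

lemma gumbel_law {Ω : Type*} [MeasureSpace Ω] [IsProbabilityMeasure (ℙ : Measure Ω)]
    {X : Ω → ℝ} (hX : Measurable X) {c : ℝ} (hc : 0 < c)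
    (hcdf : ∀ g : ℝ, ℙ {ω | X ω ≤ g} = ENNReal.ofReal (Real.exp (-(c * Real.exp (-g))))) :
    Measure.map X (ℙ : Measure Ω) = (volume : Measure ℝ).withDensity
      (fun t => ENNReal.ofReal (c * Real.exp (-t) * Real.exp (-(c * Real.exp (-t))))) := by
  haveI : IsProbabilityMeasure (Measure.map X (ℙ : Measure Ω)) := Measure.isProbabilityMeasure_map hX.aemeasurable
  refine Measure.ext_of_Iic _ _ (fun a => ?_)
  rw [Measure.map_apply hX measurableSet_Iic]
  have hpre : X ⁻¹' Iic a = {ω | X ω ≤ a} := rfl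
  rw [hpre, hcdf a, withDensity_apply _ measurableSet_Iic,
    ← ofReal_integral_eq_lintegral_ofReal (gumbel_integrableOn hc a)
      (Filter.Eventually.of_forall fun x => by positivity),
    gumbel_integral hc a]

lemma gumbel_lt {Ω : Type*} [MeasureSpace Ω] [IsProbabilityMeasure (ℙ : Measure Ω)]
    {X : Ω → ℝ} {c : ℝ} (hc : 0 < c)
    (hcdf : ∀ g : ℝ, ℙ {ω | X ω ≤ g} = ENNReal.ofReal (Real.exp (-(c * Real.exp (-g)))))
    (t : ℝ) :
    ℙ {ω | X ω < t} = ENNReal.ofReal (Real.exp (-(c * Real.exp (-t)))) := by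
  set A : ℕ → Set Ω := fun n => {ω | X ω ≤ t - 1 / (n + 1)} with hA
  have hmono : Monotone A := by
    intro n m hnm ω hω
    simp only [hA, Set.mem_setOf_eq] at hω ⊢
    refine le_trans hω ?_
    have h1 : (0:ℝ) < (n:ℝ) + 1 := by positivity
    have : (1:ℝ) / (m + 1) ≤ 1 / (n + 1) := by
      apply one_div_le_one_div_of_le h1
      have : (n:ℝ) ≤ m := Nat.cast_le.2 hnm
      linarith
    linarith
  have hU : (⋃ n, A n) = {ω | X ω < t} := by
    ext ω
    simp only [Set.mem_iUnion, Set.mem_setOf_eq, hA]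
    constructor
    · rintro ⟨n, hn⟩
      have : (0:ℝ) < 1 / ((n:ℝ) + 1) := by positivity
      linarith
    · intro h
      obtain ⟨n, hn⟩ := exists_nat_one_div_lt (sub_pos.2 h)
      exact ⟨n, by linarith⟩
  have htend := MeasureTheory.tendsto_measure_iUnion_atTop (ι := ℕ) (μ := (ℙ : Measure Ω)) (s := A) hmono
  rw [hU] at htend
  have h2 : Tendsto (fun n => ℙ (A n)) atTop
      (𝓝 (ENNReal.ofReal (Real.exp (-(c * Real.exp (-t)))))) := by
    have heq : ∀ n : ℕ, ℙ (A n) = ENNReal.ofReal (Real.exp (-(c * Real.exp (-(t - 1 / (n + 1)))))) :=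
      fun n => hcdf (t - 1 / (n + 1))
    simp only [heq]
    have hbase : Tendsto (fun n : ℕ => t - 1 / ((n:ℝ) + 1)) atTop (𝓝 t) := by
      have := tendsto_const_nhds (x := t) (f := atTop (α := ℕ))
      simpa using this.sub tendsto_one_div_add_atTop_nhds_zero_nat
    have hcont : Continuous fun x : ℝ => Real.exp (-(c * Real.exp (-x))) := by
      continuity
    exact (ENNReal.continuous_ofReal.tendsto _).comp ((hcont.tendsto t).comp hbase)
  exact tendsto_nhds_unique (htend.congr (fun n => rfl)) h2

end auxlemmas

/-- **Max and argmax of independent Gumbels.**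
Let `G i`, `i ∈ ι` (a nonempty finite index set), be independent Gumbel random variables
with locations `μ i`.  Then for every `k` and `g : ℝ`,
`P(I* = k, G* ≤ g) = (exp (μ k) / ∑ j, exp (μ j)) * exp (-exp (-g) * ∑ j, exp (μ j))`,
where `G* = max_i G i` and `I* = argmax_i G i` (a.s. unique, formalized as `G k` being the
strict maximum).  In particular `P(I* = k) = exp (μ k) / ∑ j, exp (μ j)`, and `G*` and `I*`
are independent. -/
theorem gumbel_max_argmax
    {Ω : Type*} [MeasureSpace Ω] [IsProbabilityMeasure (ℙ : Measure Ω)]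
    {ι : Type*} [Fintype ι] [Nonempty ι]
    (G : ι → Ω → ℝ) (hmeas : ∀ i, Measurable (G i))
    (hindep : iIndepFun G ℙ)
    (μ : ι → ℝ)
    (hgumbel : ∀ i, ∀ g : ℝ,
      ℙ {ω | G i ω ≤ g} = ENNReal.ofReal (Real.exp (-Real.exp (-(g - μ i))))) :
    -- joint law of the argmax and the max (this also expresses their independence)
    (∀ k : ι, ∀ g : ℝ,
      ℙ {ω | (∀ j, j ≠ k → G j ω < G k ω) ∧ G k ω ≤ g} =
        ENNReal.ofReal ((Real.exp (μ k) / ∑ j, Real.exp (μ j)) *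
          Real.exp (-Real.exp (-g) * ∑ j, Real.exp (μ j)))) ∧
    -- the argmax has the Gibbs distribution
    (∀ k : ι, ℙ {ω | ∀ j, j ≠ k → G j ω < G k ω} =
      ENNReal.ofReal (Real.exp (μ k) / ∑ j, Real.exp (μ j))) := by
  classical
  set S := ∑ j, Real.exp (μ j) with hSdef
  have hS0 : 0 < S := Finset.sum_pos (fun j _ => Real.exp_pos _) Finset.univ_nonempty
  have hgumbel' : ∀ i, ∀ g : ℝ, ℙ {ω | G i ω ≤ g} =
      ENNReal.ofReal (Real.exp (-(Real.exp (μ i) * Real.exp (-g)))) := by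
    intro i g
    have h : Real.exp (μ i) * Real.exp (-g) = Real.exp (-(g - μ i)) := by
      rw [← Real.exp_add]; congr 1; ring
    rw [hgumbel i g, h]
  have key : ∀ k : ι, ∀ g : ℝ,
      ℙ {ω | (∀ j, j ≠ k → G j ω < G k ω) ∧ G k ω ≤ g} =
        ENNReal.ofReal ((Real.exp (μ k) / S) * Real.exp (-(S * Real.exp (-g)))) := by
    intro k g
    set c := Real.exp (μ k) with hcdef
    have hc : 0 < c := Real.exp_pos _
    set T := ∑ j ∈ Finset.univ.erase k, Real.exp (μ j) with hTdef
    have hT : 0 ≤ T := Finset.sum_nonneg fun j _ => (Real.exp_pos _).le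
    have hST : T + c = S := by
      rw [hSdef, hTdef, hcdef]
      exact Finset.sum_erase_add _ _ (Finset.mem_univ k)
    set Y : Ω → ({j : ι // j ≠ k} → ℝ) := fun ω j => G j.1 ω with hYdef
    have hY : Measurable Y := measurable_pi_lambda _ fun j => hmeas j.1
    have hXY : IndepFun (G k) Y ℙ := by
      have h1 := hindep.indepFun_finset {k} (Finset.univ.erase k)
        (by simp) hmeas
      have hφ : Measurable (fun v : (({k} : Finset ι) → ℝ) =>
          v ⟨k, Finset.mem_singleton_self k⟩) := measurable_pi_apply _
      have hψ : Measurable (fun v : {x // x ∈ Finset.univ.erase k} → ℝ =>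
          (fun j : {j : ι // j ≠ k} =>
            v ⟨j.1, Finset.mem_erase.2 ⟨j.2, Finset.mem_univ _⟩⟩)) :=
        measurable_pi_lambda _ fun j => measurable_pi_apply _
      exact h1.comp hφ hψ
    set s : Set (ℝ × ({j : ι // j ≠ k} → ℝ)) :=
      {p | (∀ j, p.2 j < p.1) ∧ p.1 ≤ g} with hsdef
    have hs : MeasurableSet s := by
      have hseq : s = (⋂ j : {j : ι // j ≠ k},
          {p : ℝ × ({j : ι // j ≠ k} → ℝ) | p.2 j < p.1}) ∩
          {p : ℝ × ({j : ι // j ≠ k} → ℝ) | p.1 ≤ g} := by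
        ext p; simp [hsdef]
      rw [hseq]
      exact MeasurableSet.inter
        (MeasurableSet.iInter fun j =>
          measurableSet_lt (measurable_snd.eval) measurable_fst)
        (measurableSet_le measurable_fst measurable_const)
    have hA : {ω | (∀ j, j ≠ k → G j ω < G k ω) ∧ G k ω ≤ g} =
        (fun ω => (G k ω, Y ω)) ⁻¹' s := by
      ext ω
      simp only [Set.mem_setOf_eq, Set.mem_preimage, hsdef, hYdef]
      constructor
      · rintro ⟨h1, h2⟩; exact ⟨fun j => h1 j.1 j.2, h2⟩
      · rintro ⟨h1, h2⟩; exact ⟨fun j hj => h1 ⟨j, hj⟩, h2⟩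
    haveI : IsProbabilityMeasure (Measure.map Y ℙ) := Measure.isProbabilityMeasure_map hY.aemeasurable
    haveI : IsProbabilityMeasure (Measure.map (G k) ℙ) :=
      Measure.isProbabilityMeasure_map (hmeas k).aemeasurable
    have hmap : Measure.map (fun ω => (G k ω, Y ω)) ℙ =
        (Measure.map (G k) ℙ).prod (Measure.map Y ℙ) :=
      (indepFun_iff_map_prod_eq_prod_map_map (hmeas k).aemeasurable hY.aemeasurable).1 hXY
    rw [hA, ← Measure.map_apply ((hmeas k).prodMk hY) hs, hmap, Measure.prod_apply hs]
    have hinner : ∀ t : ℝ, (Measure.map Y ℙ) (Prod.mk t ⁻¹' s) =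
        Set.indicator (Set.Iic g)
          (fun t => ENNReal.ofReal (Real.exp (-(T * Real.exp (-t))))) t := by
      intro t
      by_cases ht : t ≤ g
      · have hpre : Prod.mk t ⁻¹' s = {y : {j : ι // j ≠ k} → ℝ | ∀ j, y j < t} := by
          ext y; simp [hsdef, ht]
        have hBmeas : MeasurableSet {y : {j : ι // j ≠ k} → ℝ | ∀ j, y j < t} := by
          rw [Set.setOf_forall]
          exact MeasurableSet.iInter fun j =>
            measurableSet_lt (measurable_pi_apply j) measurable_const
        rw [hpre, Set.indicator_of_mem (Set.mem_Iic.2 ht), Measure.map_apply hY hBmeas]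
        have hYpre : Y ⁻¹' {y : {j : ι // j ≠ k} → ℝ | ∀ j, y j < t} =
            ⋂ j ∈ Finset.univ.erase k, G j ⁻¹' Set.Iio t := by
          ext ω
          simp only [Set.mem_preimage, Set.mem_setOf_eq, Set.mem_iInter, hYdef,
            Finset.mem_erase, Set.mem_Iio]
          constructor
          · rintro h j ⟨hj, -⟩; exact h ⟨j, hj⟩
          · intro h j; exact h j.1 ⟨j.2, Finset.mem_univ _⟩
        rw [hYpre, hindep.meas_biInter (fun j _ => ⟨Set.Iio t, measurableSet_Iio, rfl⟩)]
        have hprodc : ∀ j ∈ Finset.univ.erase k, ℙ (G j ⁻¹' Set.Iio t) =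
            ENNReal.ofReal (Real.exp (-(Real.exp (μ j) * Real.exp (-t)))) := fun j _ =>
          gumbel_lt (Real.exp_pos (μ j)) (hgumbel' j) t
        rw [Finset.prod_congr rfl hprodc,
          ← ENNReal.ofReal_prod_of_nonneg (fun j _ => (Real.exp_pos _).le)]
        congr 1
        rw [← Real.exp_sum]
        congr 1
        rw [hTdef, Finset.sum_mul]
        exact Finset.sum_neg_distrib _
      · have hpre : Prod.mk t ⁻¹' s = ∅ := by
          ext y; simp [hsdef, ht]
        rw [hpre, Set.indicator_of_notMem (by simpa using ht), measure_empty]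
    rw [lintegral_congr hinner, lintegral_indicator measurableSet_Iic _]
    have hlaw : Measure.map (G k) ℙ = (volume : Measure ℝ).withDensity
        (fun t => ENNReal.ofReal (c * Real.exp (-t) * Real.exp (-(c * Real.exp (-t))))) :=
      gumbel_law (hmeas k) hc (fun g => hgumbel' k g)
    have hdmeas : Measurable
        (fun t : ℝ => ENNReal.ofReal (c * Real.exp (-t) * Real.exp (-(c * Real.exp (-t))))) := by
      apply Measurable.ennreal_ofReal
      exact (((continuous_const.mul (Real.continuous_exp.comp continuous_neg)).mul
        (Real.continuous_exp.comp
          ((continuous_const.mul (Real.continuous_exp.comp continuous_neg)).neg))).measurable)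
    have hfmeas : Measurable
        (fun t : ℝ => ENNReal.ofReal (Real.exp (-(T * Real.exp (-t))))) := by
      apply Measurable.ennreal_ofReal
      exact ((Real.continuous_exp.comp
        ((continuous_const.mul (Real.continuous_exp.comp continuous_neg)).neg)).measurable)
    rw [hlaw, restrict_withDensity measurableSet_Iic,
      lintegral_withDensity_eq_lintegral_mul _ hdmeas hfmeas]
    have hptwise : ∀ t : ℝ,
        ((fun t => ENNReal.ofReal (c * Real.exp (-t) * Real.exp (-(c * Real.exp (-t))))) *
          (fun t => ENNReal.ofReal (Real.exp (-(T * Real.exp (-t)))))) t =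
        ENNReal.ofReal ((c / S) * (S * Real.exp (-t) * Real.exp (-(S * Real.exp (-t))))) := by
      intro t
      simp only [Pi.mul_apply]
      rw [← ENNReal.ofReal_mul (by positivity)]
      congr 1
      have h1 : Real.exp (-(c * Real.exp (-t))) * Real.exp (-(T * Real.exp (-t))) =
          Real.exp (-(S * Real.exp (-t))) := by
        rw [← Real.exp_add]; congr 1; rw [← hST]; ring
      rw [mul_assoc, h1]
      field_simp
    rw [lintegral_congr hptwise,
      ← ofReal_integral_eq_lintegral_ofReal
        ((gumbel_integrableOn hS0 g).const_mul (c / S))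
        (Filter.Eventually.of_forall fun x => by positivity),
      integral_const_mul, gumbel_integral hS0 g]
  refine ⟨?_, ?_⟩
  · intro k g
    rw [key k g, show -Real.exp (-g) * S = -(S * Real.exp (-g)) from by ring]
  · intro k
    have hmono : Monotone
        (fun n : ℕ => {ω | (∀ j, j ≠ k → G j ω < G k ω) ∧ G k ω ≤ (n : ℝ)}) := by
      intro n m hnm ω hω
      exact ⟨hω.1, le_trans hω.2 (by exact_mod_cast Nat.cast_le.2 hnm)⟩
    have hU : (⋃ n : ℕ, {ω | (∀ j, j ≠ k → G j ω < G k ω) ∧ G k ω ≤ (n : ℝ)}) =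
        {ω | ∀ j, j ≠ k → G j ω < G k ω} := by
      ext ω
      simp only [Set.mem_iUnion, Set.mem_setOf_eq]
      constructor
      · rintro ⟨n, hn, -⟩; exact hn
      · intro h
        obtain ⟨n, hn⟩ := exists_nat_ge (G k ω)
        exact ⟨n, h, hn⟩
    have htend := MeasureTheory.tendsto_measure_iUnion_atTop (μ := (ℙ : Measure Ω)) hmono
    rw [hU] at htend
    have h2 : Tendsto (fun n : ℕ => ℙ {ω | (∀ j, j ≠ k → G j ω < G k ω) ∧ G k ω ≤ (n : ℝ)})
        atTop (𝓝 (ENNReal.ofReal (Real.exp (μ k) / S))) := by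
      simp only [key]
      have hexp : Tendsto (fun n : ℕ => Real.exp (-(S * Real.exp (-(n : ℝ))))) atTop (𝓝 1) := by
        have h4 : Tendsto (fun n : ℕ => Real.exp (-(n : ℝ))) atTop (𝓝 0) :=
          Real.tendsto_exp_atBot.comp (tendsto_neg_atTop_atBot.comp tendsto_natCast_atTop_atTop)
        have h3 : Tendsto (fun n : ℕ => -(S * Real.exp (-(n : ℝ)))) atTop (𝓝 0) := by
          simpa using ((h4.const_mul S).neg)
        simpa [Function.comp_def] using (Real.continuous_exp.tendsto 0).comp h3
      have h5 := (tendsto_const_nhds (x := Real.exp (μ k) / S)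
        (f := atTop (α := ℕ))).mul hexp
      rw [mul_one] at h5
      exact (ENNReal.continuous_ofReal.tendsto _).comp h5
    exact tendsto_nhds_unique (htend.congr fun n => rfl) h2
end

section
/- (Discrete Gumbel-Max trick) Let f : {1,…,m} → ℝ be a positive function and let G_1, …, G_m be independent standard Gumbel random variables (Gumbel distributed with location 0). Let I* = argmax_{1≤i≤m} (log f(i) + G_i), which is almost surely unique. Then for every k ∈ {1,…,m}, P(I* = k) = f(k) / ∑_{j=1}^m f(j). -/
open MeasureTheory ProbabilityTheory Finset

open MeasureTheory ProbabilityTheory Finset Set Filter Topology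

namespace GumbelMaxAux

noncomputable def ψ (c : ℝ) (x : ℝ) : ℝ := c * Real.exp (-x) * Real.exp (-(c * Real.exp (-x)))

lemma ψ_cont (c : ℝ) : Continuous (ψ c) := by unfold ψ; fun_prop

lemma ψ_nonneg {c : ℝ} (hc : 0 ≤ c) (x : ℝ) : 0 ≤ ψ c x := by
  unfold ψ; positivity

lemma hasDerivAt_Phi (c x : ℝ) :
    HasDerivAt (fun x => Real.exp (-(c * Real.exp (-x)))) (ψ c x) x := by
  have h1 : HasDerivAt (fun x : ℝ => -(c * Real.exp (-x))) (c * Real.exp (-x)) x := by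
    have h0 : HasDerivAt (fun x : ℝ => Real.exp (-x)) (-Real.exp (-x)) x := by
      simpa [Function.comp_def] using (Real.hasDerivAt_exp (-x)).comp x (hasDerivAt_neg x)
    exact ((h0.const_mul c).neg).congr_deriv (by ring)
  have := (Real.hasDerivAt_exp (-(c * Real.exp (-x)))).comp x h1
  simpa [ψ, mul_comm, Function.comp_def] using this

lemma sq_le_four_mul_exp {v : ℝ} (hv : 0 ≤ v) : v ^ 2 ≤ 4 * Real.exp v := by
  have h : v / 2 ≤ Real.exp (v / 2) := by
    nlinarith [Real.add_one_le_exp (v / 2)]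
  have h2 : (v / 2) ^ 2 ≤ Real.exp (v / 2) ^ 2 := by
    apply pow_le_pow_left₀ (by linarith) h
  rw [← Real.exp_nat_mul] at h2
  have h3 : (2:ℕ) * (v / 2) = v := by push_cast; ring
  rw [h3] at h2
  nlinarith [h2]

lemma ψ_le_exp {c : ℝ} (hc : 0 < c) (x : ℝ) : ψ c x ≤ (4 / c) * Real.exp x := by
  set v : ℝ := c * Real.exp (-x) with hv
  have hvpos : 0 < v := by positivity
  have h4 : v ^ 2 * Real.exp (-v) ≤ 4 := by
    rw [Real.exp_neg, mul_inv_le_iff₀ (Real.exp_pos v)]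
    simpa [mul_comm] using sq_le_four_mul_exp hvpos.le
  have hψ : ψ c x = v * Real.exp (-v) := by rw [ψ]
  have : v * Real.exp (-v) ≤ 4 / v := by
    rw [le_div_iff₀ hvpos]
    nlinarith [h4]
  rw [hψ]
  have hrw : 4 / v = (4 / c) * Real.exp x := by
    rw [hv, Real.exp_neg]
    field_simp
  linarith [hrw ▸ this]

lemma ψ_le_exp_neg {c : ℝ} (hc : 0 < c) (x : ℝ) : ψ c x ≤ c * Real.exp (-x) := by
  have h1 : Real.exp (-(c * Real.exp (-x))) ≤ 1 := by
    apply Real.exp_le_one_iff.mpr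
    have : 0 ≤ c * Real.exp (-x) := by positivity
    linarith
  unfold ψ
  exact mul_le_of_le_one_right (by positivity) h1


lemma integrable_ψ {c : ℝ} (hc : 0 < c) : Integrable (ψ c) := by
  have hmeas : AEStronglyMeasurable (ψ c) volume := (ψ_cont c).aestronglyMeasurable
  have h1 : IntegrableOn (ψ c) (Iic 0) := by
    refine Integrable.mono' ((integrableOn_exp_Iic (0:ℝ)).const_mul (4 / c))
      hmeas.restrict (Filter.Eventually.of_forall fun x => ?_)
    rw [Real.norm_eq_abs, abs_of_nonneg (ψ_nonneg hc.le x)]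
    exact ψ_le_exp hc x
  have h2 : IntegrableOn (ψ c) (Ioi 0) := by
    refine Integrable.mono' ((exp_neg_integrableOn_Ioi (0:ℝ) one_pos).const_mul c)
      hmeas.restrict (Filter.Eventually.of_forall fun x => ?_)
    rw [Real.norm_eq_abs, abs_of_nonneg (ψ_nonneg hc.le x)]
    simpa using ψ_le_exp_neg hc x
  have h := h1.union h2
  rwa [Set.Iic_union_Ioi, integrableOn_univ] at h

lemma tendsto_Phi_atBot {c : ℝ} (hc : 0 < c) :
    Tendsto (fun x => Real.exp (-(c * Real.exp (-x)))) atBot (𝓝 0) := by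
  apply Real.tendsto_exp_atBot.comp
  rw [Filter.tendsto_neg_atBot_iff]
  apply Filter.Tendsto.const_mul_atTop hc
  exact Real.tendsto_exp_atTop.comp tendsto_neg_atBot_atTop

lemma tendsto_Phi_atTop (c : ℝ) :
    Tendsto (fun x => Real.exp (-(c * Real.exp (-x)))) atTop (𝓝 1) := by
  have h : Tendsto (fun x : ℝ => -(c * Real.exp (-x))) atTop (𝓝 0) := by
    have := (Real.tendsto_exp_atBot.comp tendsto_neg_atTop_atBot).const_mul c
    simpa using this.neg
  simpa [Function.comp_def] using (Real.continuous_exp.tendsto 0).comp h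

lemma integral_ψ {c : ℝ} (hc : 0 < c) : ∫ x, ψ c x = 1 := by
  have := integral_of_hasDerivAt_of_tendsto (fun x => hasDerivAt_Phi c x)
    (integrable_ψ hc) (tendsto_Phi_atBot hc) (tendsto_Phi_atTop c)
  simpa using this

lemma integral_ψ_Iic {c : ℝ} (hc : 0 < c) (a : ℝ) :
    ∫ x in Iic a, ψ c x = Real.exp (-(c * Real.exp (-a))) := by
  have := integral_Iic_of_hasDerivAt_of_tendsto' (a := a)
    (fun x _ => hasDerivAt_Phi c x)
    ((integrable_ψ hc).integrableOn : IntegrableOn (ψ c) (Iic a) volume)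
    (tendsto_Phi_atBot hc)
  simpa using this

/-- The standard Gumbel measure on ℝ. -/
noncomputable def γ : Measure ℝ := volume.withDensity (fun x => ENNReal.ofReal (ψ 1 x))

lemma meas_ofReal_ψ (c : ℝ) : Measurable fun x => ENNReal.ofReal (ψ c x) :=
  ((ψ_cont c).measurable).ennreal_ofReal

lemma γ_Iic (a : ℝ) : γ (Iic a) = ENNReal.ofReal (Real.exp (-Real.exp (-a))) := by
  rw [γ, withDensity_apply _ measurableSet_Iic,
    ← ofReal_integral_eq_lintegral_ofReal (integrable_ψ one_pos).integrableOn
      (Filter.Eventually.of_forall fun x => ψ_nonneg zero_le_one x),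
    integral_ψ_Iic one_pos a, one_mul]

lemma γ_Iio (a : ℝ) : γ (Iio a) = ENNReal.ofReal (Real.exp (-Real.exp (-a))) := by
  rw [γ, withDensity_apply _ measurableSet_Iio,
    Measure.restrict_congr_set Iio_ae_eq_Iic, ← withDensity_apply _ measurableSet_Iic, ← γ]
  exact γ_Iic a

instance : IsProbabilityMeasure γ := by
  constructor
  rw [γ, withDensity_apply _ MeasurableSet.univ, Measure.restrict_univ,
    ← ofReal_integral_eq_lintegral_ofReal (integrable_ψ one_pos)
      (Filter.Eventually.of_forall fun x => ψ_nonneg zero_le_one x),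
    integral_ψ one_pos, ENNReal.ofReal_one]

lemma γ_lintegral {c : ℝ} (hc : 0 ≤ c) :
    ∫⁻ t, ENNReal.ofReal (Real.exp (-(c * Real.exp (-t)))) ∂γ
      = ENNReal.ofReal (1 / (1 + c)) := by
  have h1c : (0:ℝ) < 1 + c := by linarith
  rw [γ, lintegral_withDensity_eq_lintegral_mul _ (meas_ofReal_ψ 1)
    (by exact (Real.continuous_exp.comp (by fun_prop)).measurable.ennreal_ofReal)]
  have hpt : ∀ t : ℝ, (ENNReal.ofReal (ψ 1 t)) * ENNReal.ofReal (Real.exp (-(c * Real.exp (-t))))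
      = ENNReal.ofReal ((1 / (1 + c)) * ψ (1 + c) t) := by
    intro t
    rw [← ENNReal.ofReal_mul (ψ_nonneg zero_le_one t)]
    congr 1
    unfold ψ
    rw [show (1:ℝ) * Real.exp (-t) * Real.exp (-(1 * Real.exp (-t))) * Real.exp (-(c * Real.exp (-t)))
        = Real.exp (-t) * (Real.exp (-(1 * Real.exp (-t))) * Real.exp (-(c * Real.exp (-t)))) from by ring,
      ← Real.exp_add,
      show -(1 * Real.exp (-t)) + -(c * Real.exp (-t)) = -((1 + c) * Real.exp (-t)) from by ring]
    field_simp
  calc ∫⁻ t, ((fun x => ENNReal.ofReal (ψ 1 x)) * fun t =>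
        ENNReal.ofReal (Real.exp (-(c * Real.exp (-t))))) t
      = ∫⁻ t, ENNReal.ofReal ((1 / (1 + c)) * ψ (1 + c) t) := by
        apply lintegral_congr
        intro t
        exact hpt t
    _ = ENNReal.ofReal (∫ t, (1 / (1 + c)) * ψ (1 + c) t) := by
        rw [ofReal_integral_eq_lintegral_ofReal ((integrable_ψ h1c).const_mul _)
          (Filter.Eventually.of_forall fun t => mul_nonneg (by positivity) (ψ_nonneg h1c.le t))]
    _ = ENNReal.ofReal (1 / (1 + c)) := by
        rw [integral_const_mul, integral_ψ h1c, mul_one]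

end GumbelMaxAux


open GumbelMaxAux in
/-- **The discrete Gumbel-Max trick.**
Let `f : ι → ℝ` be positive on a nonempty finite set `ι` and let `G i` be i.i.d. standard
Gumbel random variables.  The argmax `I*` of `log (f i) + G i` (a.s. unique, formalized as
the index attaining the strict maximum) satisfies `P(I* = k) = f k / ∑ j, f j`. -/
theorem gumbel_max_trick
    {Ω : Type*} [MeasureSpace Ω] [IsProbabilityMeasure (ℙ : Measure Ω)]
    {ι : Type*} [Fintype ι] [Nonempty ι]
    (f : ι → ℝ) (hf : ∀ i, 0 < f i)
    (G : ι → Ω → ℝ) (hmeas : ∀ i, Measurable (G i))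
    (hindep : iIndepFun G ℙ)
    (hgumbel : ∀ i, ∀ g : ℝ,
      ℙ {ω | G i ω ≤ g} = ENNReal.ofReal (Real.exp (-Real.exp (-g)))) :
    ∀ k : ι,
      ℙ {ω | ∀ j, j ≠ k → Real.log (f j) + G j ω < Real.log (f k) + G k ω} =
        ENNReal.ofReal (f k / ∑ j, f j) := by
  classical
  intro k
  set T : Finset ι := Finset.univ.erase k with hT
  -- each G i has the Gumbel law γ
  have hlaw : ∀ i, (ℙ : Measure Ω).map (G i) = γ := by
    intro i
    have hpm : IsProbabilityMeasure ((ℙ : Measure Ω).map (G i)) :=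
      Measure.isProbabilityMeasure_map (hmeas i).aemeasurable
    refine MeasureTheory.Measure.ext_of_Iic ((ℙ : Measure Ω).map (G i)) γ fun a => ?_
    rw [Measure.map_apply (hmeas i) measurableSet_Iic, γ_Iic]
    exact hgumbel i a
  have hPIio : ∀ i (a : ℝ), ℙ {ω | G i ω < a} = ENNReal.ofReal (Real.exp (-Real.exp (-a))) := by
    intro i a
    have h : ℙ (G i ⁻¹' Set.Iio a) = γ (Set.Iio a) := by
      rw [← hlaw i, Measure.map_apply (hmeas i) measurableSet_Iio]
    rw [show {ω | G i ω < a} = G i ⁻¹' Set.Iio a from rfl, h, γ_Iio]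
  set Y : Ω → ({x // x ∈ T} → ℝ) := fun ω j => G j ω with hYdef
  have hYm : Measurable Y := measurable_pi_lambda _ fun j => hmeas j
  have hGk : Measurable (G k) := hmeas k
  set B : Set (ℝ × ({x // x ∈ T} → ℝ)) :=
    {p | ∀ j : {x // x ∈ T}, Real.log (f j) + p.2 j < Real.log (f k) + p.1} with hBdef
  have hB : MeasurableSet B := by
    have hB2 : B = ⋂ j : {x // x ∈ T},
        {p : ℝ × ({x // x ∈ T} → ℝ) | Real.log (f j) + p.2 j < Real.log (f k) + p.1} := by
      ext p; simp [hBdef, Set.mem_iInter]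
    rw [hB2]
    refine MeasurableSet.iInter fun j => measurableSet_lt ?_ ?_
    · exact ((measurable_pi_apply j).comp measurable_snd).const_add _
    · exact measurable_fst.const_add _
  have hInd : IndepFun (G k) Y ℙ := by
    have h := hindep.indepFun_finset {k} T (by simp [hT]) hmeas
    exact h.comp (measurable_pi_apply (⟨k, Finset.mem_singleton_self k⟩ : ({k} : Finset ι)))
      measurable_id
  have hset : {ω | ∀ j, j ≠ k → Real.log (f j) + G j ω < Real.log (f k) + G k ω}
      = (fun ω => (G k ω, Y ω)) ⁻¹' B := by
    ext ω
    simp only [Set.mem_setOf_eq, Set.mem_preimage, hBdef]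
    constructor
    · rintro h ⟨j, hj⟩
      exact h j (Finset.ne_of_mem_erase hj)
    · intro h j hj
      exact h ⟨j, Finset.mem_erase.mpr ⟨hj, Finset.mem_univ j⟩⟩
  have hprod : (ℙ : Measure Ω).map (fun ω => (G k ω, Y ω)) = γ.prod ((ℙ : Measure Ω).map Y) := by
    rw [(indepFun_iff_map_prod_eq_prod_map_map hGk.aemeasurable hYm.aemeasurable).mp hInd,
      hlaw k]
  have hYpm : IsProbabilityMeasure ((ℙ : Measure Ω).map Y) := Measure.isProbabilityMeasure_map hYm.aemeasurable
  set c : ℝ := (∑ j ∈ T, f j) / f k with hc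
  have hc0 : 0 ≤ c :=
    div_nonneg (Finset.sum_nonneg fun j _ => (hf j).le) (hf k).le
  have hslice : ∀ t : ℝ, ((ℙ : Measure Ω).map Y) (Prod.mk t ⁻¹' B)
      = ENNReal.ofReal (Real.exp (-(c * Real.exp (-t)))) := by
    intro t
    have hSm : MeasurableSet (Prod.mk t ⁻¹' B) := measurable_prodMk_left hB
    rw [Measure.map_apply hYm hSm]
    have hpre : Y ⁻¹' (Prod.mk t ⁻¹' B)
        = ⋂ j ∈ T, G j ⁻¹' Set.Iio (t + Real.log (f k) - Real.log (f j)) := by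
      ext ω
      simp only [Set.mem_preimage, hBdef, Set.mem_setOf_eq, Set.mem_iInter, Set.mem_Iio, hYdef]
      constructor
      · intro h j hj
        have := h ⟨j, hj⟩
        simpa using by linarith [this]
      · intro h j
        have := h j j.2
        linarith [this]
    rw [hpre,
      hindep.measure_inter_preimage_eq_mul T
        (sets := fun j => Set.Iio (t + Real.log (f k) - Real.log (f j)))
        (fun j _ => measurableSet_Iio)]
    have hterm : ∀ j ∈ T, ℙ (G j ⁻¹' Set.Iio (t + Real.log (f k) - Real.log (f j)))
        = ENNReal.ofReal (Real.exp (-(f j / f k * Real.exp (-t)))) := by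
      intro j _
      rw [show G j ⁻¹' Set.Iio (t + Real.log (f k) - Real.log (f j))
          = {ω | G j ω < t + Real.log (f k) - Real.log (f j)} from rfl,
        hPIio j]
      congr 2
      rw [show -(t + Real.log (f k) - Real.log (f j)) = Real.log (f j) - Real.log (f k) + -t
        from by ring, Real.exp_add, Real.exp_sub, Real.exp_log (hf j), Real.exp_log (hf k)]
    rw [Finset.prod_congr rfl hterm, ← ENNReal.ofReal_prod_of_nonneg
      (fun j _ => (Real.exp_pos _).le), ← Real.exp_sum]
    congr 2
    rw [Finset.sum_neg_distrib, hc, Finset.sum_div, Finset.sum_mul]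
  rw [hset, ← Measure.map_apply (hGk.prodMk hYm) hB, hprod, Measure.prod_apply hB,
    lintegral_congr hslice, γ_lintegral hc0]
  congr 1
  have hsum : ∑ j, f j = f k + ∑ j ∈ T, f j := by
    rw [hT]; exact (Finset.add_sum_erase _ f (Finset.mem_univ k)).symm
  have hs0 : (0:ℝ) < f k + ∑ j ∈ T, f j :=
    lt_add_of_pos_of_le (hf k) (Finset.sum_nonneg fun j _ => (hf j).le)
  have h1c : 1 + c = (f k + ∑ j ∈ T, f j) / f k := by
    rw [hc, add_div, div_self (hf k).ne']
  rw [hsum, h1c, one_div_div]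
end

section
/- Let μ be a σ-finite measure on ℝⁿ and P a finite nonzero measure on ℝⁿ with density f with respect to μ, Z = P(ℝⁿ). Let X* have distribution P(·)/Z, and let G* be a Gumbel random variable with location log Z, independent of X*. Assume log f(X*) is integrable. Then E[−log f(X*) + G*] = H(f) + γ, where H(f) = −∫ (f(x)/Z) log(f(x)/Z) μ(dx) is the entropy of the probability density proportional to f, and γ is the Euler–Mascheroni constant. -/
open MeasureTheory ProbabilityTheory
open scoped ENNReal

open Set Filter
open scoped NNReal Topology

lemma aux_intJ : IntegrableOn (fun t => Real.log t * Real.exp (-t)) (Set.Ioi 0) volume := by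
  have h1 : IntegrableOn (fun x => Real.exp (-x) * x ^ ((1/2 : ℝ) - 1)) (Set.Ioi 0) volume :=
    Real.GammaIntegral_convergent (by norm_num)
  have h2 : IntegrableOn (fun x => Real.exp (-x) * x ^ ((2 : ℝ) - 1)) (Set.Ioi 0) volume :=
    Real.GammaIntegral_convergent (by norm_num)
  have hg : IntegrableOn
      (fun t => 2 * (Real.exp (-t) * t ^ (-(1/2) : ℝ)) + Real.exp (-t) * t ^ (1 : ℝ))
      (Set.Ioi 0) volume := by
    have : ((1/2 : ℝ) - 1) = -(1/2) := by norm_num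
    rw [this] at h1
    have : ((2 : ℝ) - 1) = 1 := by norm_num
    rw [this] at h2
    exact (h1.const_mul 2).add h2
  refine hg.mono' ?_ ?_
  · exact ((Real.measurable_log.mul (Real.measurable_exp.comp measurable_neg)).aestronglyMeasurable)
  · rw [ae_restrict_iff' measurableSet_Ioi]
    refine Filter.Eventually.of_forall fun t ht => ?_
    have ht : (0:ℝ) < t := ht
    have hexp : (0:ℝ) < Real.exp (-t) := Real.exp_pos _
    have habs : |Real.log t| ≤ 2 * t ^ (-(1/2) : ℝ) + t ^ (1 : ℝ) := by
      have hrp : (0:ℝ) < t ^ (-(1/2) : ℝ) := Real.rpow_pos_of_pos ht _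
      have hup : Real.log t ≤ t := (Real.log_le_sub_one_of_pos ht).trans (by linarith)
      have hlow : -Real.log t ≤ 2 * t ^ (-(1/2) : ℝ) := by
        have h := Real.log_le_sub_one_of_pos hrp
        rw [Real.log_rpow ht] at h
        linarith
      rw [Real.rpow_one]
      rw [abs_le]
      constructor <;> nlinarith [Real.rpow_pos_of_pos ht (-(1/2) : ℝ)]
    rw [Real.norm_eq_abs, abs_mul, abs_of_pos hexp]
    calc |Real.log t| * Real.exp (-t) ≤ (2 * t ^ (-(1/2) : ℝ) + t ^ (1 : ℝ)) * Real.exp (-t) :=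
          mul_le_mul_of_nonneg_right habs hexp.le
      _ = 2 * (Real.exp (-t) * t ^ (-(1/2) : ℝ)) + Real.exp (-t) * t ^ (1 : ℝ) := by ring

lemma aux_J : ∫ t in Set.Ioi (0:ℝ), Real.log t * Real.exp (-t) =
    -Real.eulerMascheroniConstant := by
  have hC0 := Complex.hasDerivAt_GammaIntegral (s := 1) (by norm_num)
  have hval : (∫ t : ℝ in Set.Ioi 0, (t:ℂ) ^ ((1:ℂ) - 1) * (Real.log t * Real.exp (-t)))
      = ((∫ t in Set.Ioi (0:ℝ), Real.log t * Real.exp (-t) : ℝ) : ℂ) := by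
    rw [show (∫ t : ℝ in Set.Ioi 0, (t:ℂ) ^ ((1:ℂ) - 1) * (Real.log t * Real.exp (-t)))
        = ∫ t in Set.Ioi (0:ℝ), ((Real.log t * Real.exp (-t) : ℝ) : ℂ) from
      setIntegral_congr_fun measurableSet_Ioi fun t ht => by
        rw [sub_self, Complex.cpow_zero, one_mul]; push_cast; ring]
    exact integral_ofReal
  rw [hval] at hC0
  have hev : Complex.Gamma =ᶠ[𝓝 (1:ℂ)] Complex.GammaIntegral := by
    have hopen : IsOpen {s : ℂ | 0 < s.re} := isOpen_lt continuous_const Complex.continuous_re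
    filter_upwards [hopen.mem_nhds (by norm_num : (0:ℝ) < (1:ℂ).re)] with s hs
    exact Complex.Gamma_eq_integral hs
  have hC : HasDerivAt Complex.Gamma
      ((∫ t in Set.Ioi (0:ℝ), Real.log t * Real.exp (-t) : ℝ) : ℂ) 1 :=
    hC0.congr_of_eventuallyEq hev
  have hC' : HasDerivAt Complex.Gamma
      ((∫ t in Set.Ioi (0:ℝ), Real.log t * Real.exp (-t) : ℝ) : ℂ) ((1:ℝ) : ℂ) := by
    simpa using hC
  have hR := hC'.real_of_complex
  have heq : (fun x : ℝ => (Complex.Gamma (x:ℂ)).re) = Real.Gamma := by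
    funext x
    rw [Complex.Gamma_ofReal, Complex.ofReal_re]
  rw [heq, Complex.ofReal_re] at hR
  exact hR.unique Real.hasDerivAt_Gamma_one

section Gumbel
variable (m : ℝ)

noncomputable def gumbelMap (m : ℝ) : ℝ → ℝ := fun t => m - Real.log t

lemma gumbelMap_measurable : Measurable (gumbelMap m) :=
  measurable_const.sub Real.measurable_log

noncomputable def expM : Measure ℝ := ProbabilityTheory.expMeasure 1

instance : IsProbabilityMeasure expM :=
  ProbabilityTheory.isProbabilityMeasure_expMeasure one_pos

lemma expM_eq : expM = volume.withDensity (ProbabilityTheory.exponentialPDF 1) := rfl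

lemma expM_Iic (x : ℝ) : expM (Set.Iic x) =
    ENNReal.ofReal (if 0 ≤ x then 1 - Real.exp (-(1 * x)) else 0) := by
  rw [expM_eq, withDensity_apply _ measurableSet_Iic,
    ProbabilityTheory.lintegral_exponentialPDF_eq_antiDeriv one_pos]

lemma expM_Iic_zero : expM (Set.Iic 0) = 0 := by
  rw [expM_Iic]; simp

lemma expM_singleton (x : ℝ) : expM {x} = 0 := by
  rw [expM_eq]
  exact (withDensity_absolutelyContinuous volume _) (Real.volume_singleton)

lemma expM_Ici {c : ℝ} (hc : 0 < c) : expM (Set.Ici c) = ENNReal.ofReal (Real.exp (-c)) := by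
  have hIio : expM (Set.Iio c) = expM (Set.Iic c) := by
    refine le_antisymm (measure_mono Set.Iio_subset_Iic_self) ?_
    rw [← Set.Iio_union_right]
    exact (measure_union_le _ _).trans (by rw [expM_singleton, add_zero])
  have h1 : expM (Set.Ici c) = 1 - expM (Set.Iio c) := by
    rw [← Set.compl_Iio, measure_compl measurableSet_Iio (measure_ne_top _ _), measure_univ]
  rw [h1, hIio, expM_Iic, if_pos hc.le, one_mul]
  have hle : Real.exp (-c) ≤ 1 := Real.exp_le_one_iff.mpr (by linarith)
  have key : ENNReal.ofReal (Real.exp (-c)) + ENNReal.ofReal (1 - Real.exp (-c)) = 1 := by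
    rw [← ENNReal.ofReal_add (Real.exp_pos _).le (by linarith)]
    norm_num
  exact (ENNReal.eq_sub_of_add_eq ENNReal.ofReal_ne_top key).symm

lemma expM_gumbel_Iic (g : ℝ) :
    expM ((gumbelMap m) ⁻¹' Set.Iic g) = ENNReal.ofReal (Real.exp (-Real.exp (-(g - m)))) := by
  set c : ℝ := Real.exp (m - g) with hc
  have hcpos : 0 < c := Real.exp_pos _
  have hsub : ∀ S : Set ℝ, expM S = expM (S ∩ Set.Ioi 0) := by
    intro S
    refine le_antisymm ?_ (measure_mono Set.inter_subset_left)
    have : S ⊆ (S ∩ Set.Ioi 0) ∪ Set.Iic 0 := by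
      intro t ht
      rcases le_or_gt t 0 with h | h
      · exact Or.inr h
      · exact Or.inl ⟨ht, h⟩
    exact (measure_mono this).trans
      ((measure_union_le _ _).trans (by rw [expM_Iic_zero, add_zero]))
  have hset : (gumbelMap m) ⁻¹' Set.Iic g ∩ Set.Ioi 0 = Set.Ici c ∩ Set.Ioi 0 := by
    ext t
    simp only [Set.mem_inter_iff, Set.mem_preimage, Set.mem_Iic, Set.mem_Ioi, Set.mem_Ici,
      gumbelMap]
    constructor
    · rintro ⟨h1, h2⟩
      refine ⟨?_, h2⟩
      rw [hc, ← Real.exp_log h2]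
      exact Real.exp_le_exp.mpr (by linarith)
    · rintro ⟨h1, h2⟩
      refine ⟨?_, h2⟩
      have := Real.log_le_log hcpos h1
      rw [hc, Real.log_exp] at this
      linarith
  rw [hsub, hset, ← hsub, expM_Ici hcpos]
  congr 2
  rw [hc]
  congr 1
  ring

end Gumbel

section Gumbel2

noncomputable def pdfnn : ℝ → ℝ≥0 := fun t => (ProbabilityTheory.exponentialPDFReal 1 t).toNNReal

lemma pdfnn_meas : Measurable pdfnn :=
  (ProbabilityTheory.measurable_exponentialPDFReal 1).real_toNNReal

lemma expM_eq' : expM = volume.withDensity (fun t => (pdfnn t : ℝ≥0∞)) := by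
  rw [expM_eq]
  congr 1

lemma pdfnn_smul (g : ℝ → ℝ) (t : ℝ) :
    pdfnn t • g t = (if 0 ≤ t then Real.exp (-t) * g t else 0) := by
  have : (pdfnn t : ℝ) = ProbabilityTheory.exponentialPDFReal 1 t := by
    rw [pdfnn, Real.coe_toNNReal _ (ProbabilityTheory.exponentialPDFReal_nonneg one_pos t)]
  rw [NNReal.smul_def, smul_eq_mul, this, ProbabilityTheory.exponentialPDFReal,
    ProbabilityTheory.gammaPDFReal]
  split_ifs with h
  · simp [Real.Gamma_one]
  · simp

lemma log_integrable_expM : Integrable Real.log expM := by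
  rw [expM_eq', integrable_withDensity_iff_integrable_smul pdfnn_meas]
  have heq : (fun t => pdfnn t • Real.log t)
      = Set.indicator (Set.Ici (0:ℝ)) (fun t => Real.log t * Real.exp (-t)) := by
    funext t
    rw [pdfnn_smul]
    simp only [Set.indicator, Set.mem_Ici]
    split_ifs with h
    · ring
    · rfl
  rw [heq, integrable_indicator_iff measurableSet_Ici]
  rw [integrableOn_Ici_iff_integrableOn_Ioi]
  exact aux_intJ

lemma integral_log_expM : ∫ t, Real.log t ∂expM = -Real.eulerMascheroniConstant := by
  rw [expM_eq', integral_withDensity_eq_integral_smul pdfnn_meas]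
  have heq : (fun t => pdfnn t • Real.log t)
      = Set.indicator (Set.Ici (0:ℝ)) (fun t => Real.log t * Real.exp (-t)) := by
    funext t
    rw [pdfnn_smul]
    simp only [Set.indicator, Set.mem_Ici]
    split_ifs with h
    · ring
    · rfl
  rw [heq, integral_indicator measurableSet_Ici,
    integral_Ici_eq_integral_Ioi, aux_J]

lemma gumbelMap_integrable (m : ℝ) : Integrable (gumbelMap m) expM :=
  (integrable_const m).sub log_integrable_expM

lemma integral_gumbelMap (m : ℝ) :
    ∫ t, gumbelMap m t ∂expM = m + Real.eulerMascheroniConstant := by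
  have : ∫ t, gumbelMap m t ∂expM = ∫ t, (m - Real.log t) ∂expM := rfl
  rw [this, integral_sub (integrable_const m) log_integrable_expM, integral_log_expM,
    integral_const, probReal_univ, one_smul]
  ring

end Gumbel2

/-- **Entropy representation via a Gumbel process.**
Let `P` be a finite nonzero measure on `ℝⁿ` with density `f` w.r.t. a σ-finite measure `μ`,
`Z = P(ℝⁿ)`.  If `X* ~ P/Z`, `G*` is Gumbel with location `log Z` independent of `X*`, and
`log f (X*)` is integrable, then `E[-log f (X*) + G*] = H(f) + γ`, where
`H(f) = -∫ (f x / Z) log (f x / Z) dμ` and `γ` is the Euler–Mascheroni constant. -/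
theorem gumbel_entropy_representation
    {Ω : Type*} [MeasureSpace Ω] [IsProbabilityMeasure (ℙ : Measure Ω)]
    {n : ℕ} (μ P : Measure (Fin n → ℝ)) [SigmaFinite μ] [IsFiniteMeasure P] (hP : P ≠ 0)
    (f : (Fin n → ℝ) → ℝ) (hfmeas : Measurable f) (hf0 : ∀ x, 0 ≤ f x)
    (hPd : ∀ B, MeasurableSet B → P B = ∫⁻ x in B, ENNReal.ofReal (f x) ∂μ)
    (X : Ω → (Fin n → ℝ)) (G : Ω → ℝ) (hXmeas : Measurable X) (hGmeas : Measurable G)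
    (hX : ∀ B, MeasurableSet B → ℙ {ω | X ω ∈ B} = P B / P Set.univ)
    (hG : ∀ g : ℝ, ℙ {ω | G ω ≤ g} =
      ENNReal.ofReal (Real.exp (-Real.exp (-(g - Real.log (P Set.univ).toReal)))))
    (hindep : IndepFun X G ℙ)
    (hint : Integrable (fun ω => Real.log (f (X ω))) ℙ) :
    ∫ ω, (-Real.log (f (X ω)) + G ω) ∂ℙ =
      (-∫ x, (f x / (P Set.univ).toReal) *
          Real.log (f x / (P Set.univ).toReal) ∂μ)
        + Real.eulerMascheroniConstant := by
  set Zen : ℝ≥0∞ := P Set.univ with hZen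
  have hZ0 : Zen ≠ 0 := fun h => hP (by rwa [← Measure.measure_univ_eq_zero])
  have hZtop : Zen ≠ ⊤ := measure_ne_top P _
  set Z : ℝ := Zen.toReal with hZdef
  have hZpos : 0 < Z := ENNReal.toReal_pos hZ0 hZtop
  set m : ℝ := Real.log Z with hm
  -- P as a density measure
  set fnn : (Fin n → ℝ) → ℝ≥0 := fun x => (f x).toNNReal with hfnn
  have hfnn_meas : Measurable fnn := hfmeas.real_toNNReal
  have hcoe : (fun x => (fnn x : ℝ≥0∞)) = fun x => ENNReal.ofReal (f x) := rfl
  have hPwd : P = μ.withDensity (fun x => (fnn x : ℝ≥0∞)) := by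
    refine Measure.ext fun B hB => ?_
    rw [hcoe, hPd B hB, withDensity_apply _ hB]
  -- f is integrable with integral Z
  have hlint : ∫⁻ x, ENNReal.ofReal (f x) ∂μ = Zen := by
    rw [hZen, hPd Set.univ MeasurableSet.univ, Measure.restrict_univ]
  have hf_int : Integrable f μ := by
    refine ⟨hfmeas.aestronglyMeasurable, ?_⟩
    rw [HasFiniteIntegral]
    have : ∀ x, ‖f x‖ₑ = ENNReal.ofReal (f x) := fun x =>
      Real.enorm_eq_ofReal (hf0 x)
    simp_rw [this, hlint]
    exact hZtop.lt_top
  have hintf : ∫ x, f x ∂μ = Z := by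
    have h := ofReal_integral_eq_lintegral_ofReal hf_int (Filter.Eventually.of_forall hf0)
    rw [hlint] at h
    rw [hZdef, ← h, ENNReal.toReal_ofReal (integral_nonneg hf0)]
  -- distribution of X
  have hmapX : Measure.map X ℙ = Zen⁻¹ • P := by
    refine Measure.ext fun B hB => ?_
    rw [Measure.map_apply hXmeas hB, Measure.smul_apply, smul_eq_mul]
    have : ℙ (X ⁻¹' B) = ℙ {ω | X ω ∈ B} := rfl
    rw [this, hX B hB, div_eq_mul_inv, mul_comm]
  have hmeas_logf : Measurable fun x => Real.log (f x) := Real.measurable_log.comp hfmeas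
  -- integrability of f * log f
  have hint_logf_P : Integrable (fun x => Real.log (f x)) P := by
    have h1 : Integrable (fun x => Real.log (f x)) (Measure.map X ℙ) :=
      (integrable_map_measure hmeas_logf.aestronglyMeasurable hXmeas.aemeasurable).mpr hint
    rw [hmapX] at h1
    exact (integrable_smul_measure (ENNReal.inv_ne_zero.mpr hZtop)
      (ENNReal.inv_ne_top.mpr hZ0)).mp h1
  have hint_flogf : Integrable (fun x => f x * Real.log (f x)) μ := by
    have := (integrable_withDensity_iff_integrable_smul hfnn_meas).mp (hPwd ▸ hint_logf_P)
    refine this.congr (Filter.Eventually.of_forall fun x => ?_)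
    simp [NNReal.smul_def, hfnn, Real.coe_toNNReal _ (hf0 x)]
  -- value of E[log f(X)]
  have h1 : ∫ ω, Real.log (f (X ω)) ∂ℙ = Z⁻¹ * ∫ x, f x * Real.log (f x) ∂μ := by
    rw [← integral_map hXmeas.aemeasurable hmeas_logf.aestronglyMeasurable, hmapX,
      integral_smul_measure, ENNReal.toReal_inv, smul_eq_mul]
    congr 1
    rw [hPwd, integral_withDensity_eq_integral_smul hfnn_meas]
    refine integral_congr_ae (Filter.Eventually.of_forall fun x => ?_)
    simp [NNReal.smul_def, hfnn, Real.coe_toNNReal _ (hf0 x)]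
  -- entropy rewrite
  have h2 : ∫ x, (f x / Z) * Real.log (f x / Z) ∂μ
      = Z⁻¹ * ∫ x, f x * Real.log (f x) ∂μ - m := by
    have hpt : ∀ x, (f x / Z) * Real.log (f x / Z)
        = Z⁻¹ * (f x * Real.log (f x)) - (m * Z⁻¹) * f x := by
      intro x
      rcases eq_or_lt_of_le (hf0 x) with h | h
      · rw [← h]; simp
      · rw [Real.log_div (ne_of_gt h) (ne_of_gt hZpos), ← hm]
        field_simp
    simp_rw [hpt]
    rw [integral_sub (hint_flogf.const_mul _) (hf_int.const_mul _),
      integral_const_mul, integral_const_mul, hintf]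
    field_simp
  -- distribution of G
  have hmapG : Measure.map G ℙ = Measure.map (gumbelMap m) expM := by
    have h1 : IsFiniteMeasure (Measure.map G ℙ) := by
      refine ⟨?_⟩
      rw [Measure.map_apply hGmeas MeasurableSet.univ]
      exact measure_lt_top _ _
    refine Measure.ext_of_Iic _ _ fun g => ?_
    rw [Measure.map_apply hGmeas measurableSet_Iic,
      Measure.map_apply (gumbelMap_measurable m) measurableSet_Iic, expM_gumbel_Iic]
    exact hG g
  have hGint : Integrable G ℙ := by
    have h1 : Integrable id (Measure.map (gumbelMap m) expM) :=
      (integrable_map_measure aestronglyMeasurable_id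
        (gumbelMap_measurable m).aemeasurable).mpr (gumbelMap_integrable m)
    rw [← hmapG] at h1
    exact (integrable_map_measure aestronglyMeasurable_id hGmeas.aemeasurable).mp h1
  have h3 : ∫ ω, G ω ∂ℙ = m + Real.eulerMascheroniConstant := by
    have : ∫ ω, G ω ∂ℙ = ∫ x, id x ∂(Measure.map G ℙ) :=
      (integral_map hGmeas.aemeasurable aestronglyMeasurable_id).symm
    rw [this, hmapG, integral_map (gumbelMap_measurable m).aemeasurable
      aestronglyMeasurable_id]
    exact integral_gumbelMap m
  have hneg : Integrable (fun ω => -Real.log (f (X ω))) ℙ := hint.neg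
  rw [integral_add hneg hGint, integral_neg, h1, h3, h2]
  ring
end

section
/- (Runtime of rejection sampling with oracle adaptive bounds) Let μ be a σ-finite measure on ℝⁿ, and let P, Q be finite nonzero measures on ℝⁿ with densities f and g with respect to μ, such that f and g have the same support. Let (M_i)_{i≥1} be constants with f(x)/g(x) ≤ M_i for all x in the support of g and all i. Let (X_i)_{i≥1} be i.i.d. with distribution Q(·)/Q(ℝⁿ) and (U_i)_{i≥1} i.i.d. uniform on [0,1], all independent, and let K = min{i ≥ 1 : U_i < f(X_i)/(g(X_i)M_i)}. Then P(K > k) = ∏_{i=1}^k (1 − ρ_i) for every k ∈ ℕ, where ρ_i = P(ℝⁿ)/(Q(ℝⁿ)M_i). -/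
open MeasureTheory ProbabilityTheory Finset
open scoped ENNReal

/-- **Runtime of rejection sampling with oracle adaptive bounds.**
With i.i.d. proposals `X i ~ Q/Q(ℝⁿ)`, i.i.d. `U i ~ Uniform[0,1]`, all independent, and a
sequence of bounds `M i` with `f x / g x ≤ M i` on the support of `g`, the number `K` of
proposals until the first acceptance `U i < f (X i) / (g (X i) M i)` satisfies
`P(K > k) = ∏_{i ≤ k} (1 - ρ i)` where `ρ i = P(ℝⁿ)/(Q(ℝⁿ) M i)`. -/
theorem oracle_rejection_sampling_runtime
    {Ω : Type*} [MeasureSpace Ω] [IsProbabilityMeasure (ℙ : Measure Ω)]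
    {n : ℕ} (μ P Q : Measure (Fin n → ℝ)) [SigmaFinite μ]
    [IsFiniteMeasure P] [IsFiniteMeasure Q] (hP : P ≠ 0) (hQ : Q ≠ 0)
    (f g : (Fin n → ℝ) → ℝ) (hfmeas : Measurable f) (hgmeas : Measurable g)
    (hf0 : ∀ x, 0 ≤ f x) (hg0 : ∀ x, 0 ≤ g x)
    (hPd : ∀ B, MeasurableSet B → P B = ∫⁻ x in B, ENNReal.ofReal (f x) ∂μ)
    (hQd : ∀ B, MeasurableSet B → Q B = ∫⁻ x in B, ENNReal.ofReal (g x) ∂μ)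
    (hsupp : Function.support f = Function.support g)
    (M : ℕ → ℝ)
    (hbound : ∀ i, ∀ x ∈ Function.support g, f x / g x ≤ M i)
    (X : ℕ → Ω → (Fin n → ℝ)) (U : ℕ → Ω → ℝ)
    (hXmeas : ∀ i, Measurable (X i)) (hUmeas : ∀ i, Measurable (U i))
    (hX : ∀ i, ∀ B, MeasurableSet B → ℙ {ω | X i ω ∈ B} = Q B / Q Set.univ)
    (hU : ∀ i, ∀ t ∈ Set.Icc (0:ℝ) 1, ℙ {ω | U i ω ≤ t} = ENNReal.ofReal t)
    (hpairs : iIndepFun (fun i ω => (X i ω, U i ω)) ℙ)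
    (hXU : ∀ i, IndepFun (X i) (U i) ℙ) :
    ∀ k : ℕ, ℙ {ω | ∀ i < k, ¬ (U i ω < f (X i ω) / (g (X i ω) * M i))} =
      ENNReal.ofReal (∏ i ∈ Finset.range k,
        (1 - (P Set.univ).toReal / ((Q Set.univ).toReal * M i))) := by
  classical
  set Pt := (P Set.univ).toReal with hPt
  set Qt := (Q Set.univ).toReal with hQt
  have hPne : P Set.univ ≠ 0 := Measure.measure_univ_ne_zero.mpr hP
  have hQne : Q Set.univ ≠ 0 := Measure.measure_univ_ne_zero.mpr hQ
  have hPtop : P Set.univ ≠ ∞ := measure_ne_top P _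
  have hQtop : Q Set.univ ≠ ∞ := measure_ne_top Q _
  have hQtpos : 0 < Qt := ENNReal.toReal_pos hQne hQtop
  have hPt0 : 0 ≤ Pt := ENNReal.toReal_nonneg
  -- there is a point where f is positive
  have hfex : ∃ x, 0 < f x := by
    by_contra h
    push_neg at h
    have hf' : ∀ x, f x = 0 := fun x => le_antisymm (h x) (hf0 x)
    apply hPne
    rw [hPd Set.univ MeasurableSet.univ]
    simp [hf']
  -- the bounds are positive
  have hMpos : ∀ i, 0 < M i := by
    intro i
    obtain ⟨x, hx⟩ := hfex
    have hxs : x ∈ Function.support g := hsupp ▸ (by simpa [Function.mem_support] using hx.ne')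
    have hgx : 0 < g x := lt_of_le_of_ne (hg0 x) (Ne.symm hxs)
    exact lt_of_lt_of_le (div_pos hx hgx) (hbound i x hxs)
  -- f = 0 when g = 0
  have hf_of_g : ∀ x, g x = 0 → f x = 0 := by
    intro x hgx
    by_contra hfx
    exact (hsupp ▸ (Function.mem_support.mpr hfx) : x ∈ Function.support g) hgx
  -- pointwise domination
  have hfg : ∀ i x, f x ≤ M i * g x := by
    intro i x
    by_cases hgx : g x = 0
    · simp [hf_of_g x hgx, hgx]
    · have hgpos : 0 < g x := lt_of_le_of_ne (hg0 x) (Ne.symm hgx)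
      have hb := hbound i x hgx
      calc f x = f x / g x * g x := by field_simp
        _ ≤ M i * g x := mul_le_mul_of_nonneg_right hb hgpos.le
  -- the acceptance ratio lies in [0,1]
  have hr0 : ∀ i x, 0 ≤ f x / (g x * M i) :=
    fun i x => div_nonneg (hf0 x) (mul_nonneg (hg0 x) (hMpos i).le)
  have hr1 : ∀ i x, f x / (g x * M i) ≤ 1 := by
    intro i x
    by_cases hgx : g x = 0
    · simp [hf_of_g x hgx, hgx]
    · have hgpos : 0 < g x := lt_of_le_of_ne (hg0 x) (Ne.symm hgx)
      rw [div_le_one (mul_pos hgpos (hMpos i))]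
      calc f x ≤ M i * g x := hfg i x
        _ = g x * M i := mul_comm _ _
  -- the CDF of the uniform variables, strict version
  have hUlt : ∀ i t, 0 ≤ t → t ≤ 1 → ℙ {ω | U i ω < t} = ENNReal.ofReal t := by
    intro i t ht0 ht1
    rcases eq_or_lt_of_le ht0 with h0 | h0
    · have hsub : {ω | U i ω < t} ⊆ {ω | U i ω ≤ t} := fun ω (h : U _ ω < t) => le_of_lt h
      have h1 := hU i t ⟨ht0, ht1⟩
      have hle : ℙ {ω | U i ω < t} ≤ ENNReal.ofReal t := h1 ▸ measure_mono hsub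
      rw [← h0] at hle ⊢
      simpa using hle
    · refine le_antisymm ?_ ?_
      · calc ℙ {ω | U i ω < t} ≤ ℙ {ω | U i ω ≤ t} :=
              measure_mono (fun ω (h : U _ ω < t) => le_of_lt h)
          _ = ENNReal.ofReal t := hU i t ⟨ht0, ht1⟩
      · have hseq : Filter.Tendsto (fun m : ℕ => ENNReal.ofReal (t - t / m)) Filter.atTop
            (nhds (ENNReal.ofReal t)) := by
          apply ENNReal.tendsto_ofReal
          have := (tendsto_const_nhds (x := t) (f := Filter.atTop (α := ℕ))).sub
            (tendsto_const_div_atTop_nhds_zero_nat t)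
          simpa using this
        refine le_of_tendsto hseq ?_
        filter_upwards [Filter.eventually_ge_atTop 1] with m hm
        have hm1 : (1:ℝ) ≤ m := by exact_mod_cast hm
        have hmpos : (0:ℝ) < m := lt_of_lt_of_le one_pos hm1
        have hdiv_pos : 0 < t / m := div_pos h0 hmpos
        have hdiv_le : t / m ≤ t := div_le_self h0.le hm1
        have hs0 : 0 ≤ t - t / m := by linarith
        have hs1 : t - t / m ≤ 1 := by linarith
        have hslt : t - t / m < t := by linarith
        calc ENNReal.ofReal (t - t / m) = ℙ {ω | U i ω ≤ t - t / m} :=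
              (hU i _ ⟨hs0, hs1⟩).symm
          _ ≤ ℙ {ω | U i ω < t} :=
              measure_mono (fun ω (h : U _ ω ≤ t - t / m) => lt_of_le_of_lt h hslt)
  -- the acceptance region is measurable
  have hSmeas : ∀ i, MeasurableSet {p : (Fin n → ℝ) × ℝ | p.2 < f p.1 / (g p.1 * M i)} := by
    intro i
    exact measurableSet_lt measurable_snd
      ((hfmeas.comp measurable_fst).div ((hgmeas.comp measurable_fst).mul_const _))
  -- the law of X i
  have hmapX : ∀ i, Measure.map (X i) ℙ = (Q Set.univ)⁻¹ • Q := by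
    intro i
    ext B hB
    rw [Measure.map_apply (hXmeas i) hB, Measure.smul_apply, smul_eq_mul,
      ← ENNReal.div_eq_inv_mul]
    exact hX i B hB
  -- Q as a density measure
  have hQw : Q = μ.withDensity (fun x => ENNReal.ofReal (g x)) := by
    ext B hB
    rw [hQd B hB, withDensity_apply _ hB]
  have hPu : ∫⁻ x, ENNReal.ofReal (f x) ∂μ = P Set.univ := by
    rw [hPd Set.univ MeasurableSet.univ, setLIntegral_univ]
  -- acceptance probability at step i
  have hacc : ∀ i, ℙ {ω | U i ω < f (X i ω) / (g (X i ω) * M i)} =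
      ENNReal.ofReal (Pt / (Qt * M i)) := by
    intro i
    have hmap := (indepFun_iff_map_prod_eq_prod_map_map
      (hXmeas i).aemeasurable (hUmeas i).aemeasurable).mp (hXU i)
    have hev : {ω | U i ω < f (X i ω) / (g (X i ω) * M i)} =
        (fun ω => (X i ω, U i ω)) ⁻¹' {p : (Fin n → ℝ) × ℝ | p.2 < f p.1 / (g p.1 * M i)} := rfl
    rw [hev, ← Measure.map_apply ((hXmeas i).prodMk (hUmeas i)) (hSmeas i), hmap,
      Measure.prod_apply (hSmeas i)]
    have hslice : ∀ x : Fin n → ℝ,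
        (Measure.map (U i) ℙ) (Prod.mk x ⁻¹' {p : (Fin n → ℝ) × ℝ | p.2 < f p.1 / (g p.1 * M i)}) =
          ENNReal.ofReal (f x / (g x * M i)) := by
      intro x
      have hpre : Prod.mk x ⁻¹' {p : (Fin n → ℝ) × ℝ | p.2 < f p.1 / (g p.1 * M i)} =
          Set.Iio (f x / (g x * M i)) := rfl
      rw [hpre, Measure.map_apply (hUmeas i) measurableSet_Iio]
      exact hUlt i _ (hr0 i x) (hr1 i x)
    simp only [hslice]
    rw [hmapX i, lintegral_smul_measure]
    have hpt : (fun x => (fun y => ENNReal.ofReal (g y)) x *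
          (fun y => ENNReal.ofReal (f y / (g y * M i))) x) =
        fun x => ENNReal.ofReal (M i)⁻¹ * ENNReal.ofReal (f x) := by
      funext x
      simp only
      rw [← ENNReal.ofReal_mul (hg0 x), ← ENNReal.ofReal_mul (inv_nonneg.mpr (hMpos i).le)]
      congr 1
      by_cases hgx : g x = 0
      · simp [hf_of_g x hgx, hgx]
      · field_simp [hgx]
    have hint : ∫⁻ x, ENNReal.ofReal (f x / (g x * M i)) ∂Q =
        ENNReal.ofReal (M i)⁻¹ * P Set.univ := by
      rw [hQw, lintegral_withDensity_eq_lintegral_mul _ hgmeas.ennreal_ofReal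
          (g := fun y => ENNReal.ofReal (f y / (g y * M i))) ((hfmeas.div (hgmeas.mul_const _)).ennreal_ofReal),
        show ((fun y => ENNReal.ofReal (g y)) * fun y => ENNReal.ofReal (f y / (g y * M i))) =
          fun x => ENNReal.ofReal (M i)⁻¹ * ENNReal.ofReal (f x) from hpt,
        lintegral_const_mul _ hfmeas.ennreal_ofReal, hPu]
    rw [hint, smul_eq_mul]
    rw [← ENNReal.toReal_eq_toReal_iff'
      (ENNReal.mul_ne_top (ENNReal.inv_ne_top.mpr hQne)
        (ENNReal.mul_ne_top ENNReal.ofReal_ne_top hPtop)) ENNReal.ofReal_ne_top]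
    rw [ENNReal.toReal_mul, ENNReal.toReal_mul, ENNReal.toReal_inv,
      ENNReal.toReal_ofReal (inv_nonneg.mpr (hMpos i).le),
      ENNReal.toReal_ofReal (div_nonneg hPt0 (mul_pos hQtpos (hMpos i)).le)]
    rw [← hQt, ← hPt]
    field_simp
  -- probability of rejection at step i
  have hcomp : ∀ i, ℙ {ω | U i ω < f (X i ω) / (g (X i ω) * M i)}ᶜ =
      ENNReal.ofReal (1 - Pt / (Qt * M i)) := by
    intro i
    have hmeasA : MeasurableSet {ω | U i ω < f (X i ω) / (g (X i ω) * M i)} :=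
      ((hXmeas i).prodMk (hUmeas i)) (hSmeas i)
    rw [measure_compl hmeasA (measure_ne_top _ _), measure_univ, hacc i,
      ← ENNReal.ofReal_one, ← ENNReal.ofReal_sub _ (div_nonneg hPt0 (mul_pos hQtpos (hMpos i)).le)]
  -- each factor is nonnegative
  have hrho1 : ∀ i : ℕ, Pt / (Qt * M i) ≤ 1 := by
    intro i
    rw [div_le_one (mul_pos hQtpos (hMpos i))]
    have hle : P Set.univ ≤ ENNReal.ofReal (M i) * Q Set.univ := by
      rw [hPd _ MeasurableSet.univ, hQd _ MeasurableSet.univ, setLIntegral_univ,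
        setLIntegral_univ, ← lintegral_const_mul _ hgmeas.ennreal_ofReal]
      refine lintegral_mono fun x => ?_
      rw [← ENNReal.ofReal_mul (hMpos i).le]
      exact ENNReal.ofReal_le_ofReal (hfg i x)
    calc Pt ≤ (ENNReal.ofReal (M i) * Q Set.univ).toReal :=
          ENNReal.toReal_mono (ENNReal.mul_ne_top ENNReal.ofReal_ne_top hQtop) hle
      _ = M i * Qt := by rw [ENNReal.toReal_mul, ENNReal.toReal_ofReal (hMpos i).le]
      _ = Qt * M i := mul_comm _ _
  -- main computation
  intro k
  have hset : {ω | ∀ i < k, ¬ (U i ω < f (X i ω) / (g (X i ω) * M i))} =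
      ⋂ i ∈ Finset.range k, (fun ω => (X i ω, U i ω)) ⁻¹'
        {p : (Fin n → ℝ) × ℝ | p.2 < f p.1 / (g p.1 * M i)}ᶜ := by
    ext ω
    simp [Finset.mem_range]
  rw [hset, hpairs.meas_biInter (fun i _ =>
    MeasurableSpace.measurableSet_comap.mpr
      ⟨{p : (Fin n → ℝ) × ℝ | p.2 < f p.1 / (g p.1 * M i)}ᶜ, (hSmeas i).compl, rfl⟩)]
  rw [ENNReal.ofReal_prod_of_nonneg (fun i _ => by linarith [hrho1 i])]
  refine Finset.prod_congr rfl fun i _ => ?_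
  exact hcomp i
end

section
/- Let λ_1 > 0 and λ_2 > 0, let E_1, E_2 be independent exponential random variables with rates λ_1, λ_2, and set G_1 = −log E_1 and G_2 = −log(E_1 + E_2). Then G_1 is Gumbel distributed with location log λ_1, G_2 ≤ G_1 almost surely, and for all g ≤ h, P(G_2 ≤ g | G_1 = h) equals the distribution function of a Gumbel random variable with location log λ_2 truncated to (−∞, h], namely exp(−exp(−(g − log λ_2)) + exp(−(h − log λ_2))) for g ≤ h and 1 for g > h. -/
open MeasureTheory ProbabilityTheory
open scoped ENNReal

open Real Filter Set
open scoped Topology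

namespace TruncGumbelAux

/-- The CDF of a Gumbel with location `log lam` truncated to `(-∞, h]`, in closed form. -/
noncomputable def Ffun (lam h g : ℝ) : ℝ :=
  rexp (lam * (rexp (-h) - max (rexp (-g)) (rexp (-h))))

lemma Ffun_cont (lam h : ℝ) : Continuous (Ffun lam h) := by
  unfold Ffun; fun_prop

lemma Ffun_cont_h (lam g : ℝ) : Continuous (fun h => Ffun lam h g) := by
  unfold Ffun; fun_prop

lemma Ffun_mono {lam : ℝ} (hl : 0 ≤ lam) (h : ℝ) : Monotone (Ffun lam h) := by
  intro a b hab
  unfold Ffun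
  have : rexp (-b) ≤ rexp (-a) := exp_le_exp.2 (by linarith)
  gcongr

noncomputable def F (lam h : ℝ) (hl : 0 ≤ lam) : StieltjesFunction ℝ where
  toFun := Ffun lam h
  mono' := Ffun_mono hl h
  right_continuous' := fun x => (Ffun_cont lam h).continuousWithinAt

lemma F_apply (lam h : ℝ) (hl : 0 ≤ lam) (g : ℝ) : F lam h hl g = Ffun lam h g := rfl

lemma Ffun_tendsto_atBot {lam : ℝ} (hl : 0 < lam) (h : ℝ) :
    Tendsto (Ffun lam h) atBot (𝓝 0) := by
  have h1 : Tendsto (fun g : ℝ => rexp (-g)) atBot atTop :=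
    tendsto_exp_atTop.comp tendsto_neg_atBot_atTop
  have h2 : Tendsto (fun g : ℝ => max (rexp (-g)) (rexp (-h))) atBot atTop :=
    tendsto_atTop_mono (fun g => le_max_left _ _) h1
  have h3 : Tendsto (fun g : ℝ => lam * rexp (-h) +
      -(lam * max (rexp (-g)) (rexp (-h)))) atBot atBot :=
    tendsto_atBot_add_const_left _ _ (tendsto_neg_atTop_atBot.comp (h2.const_mul_atTop hl))
  have h4 : Tendsto (fun g : ℝ => lam * (rexp (-h) - max (rexp (-g)) (rexp (-h)))) atBot atBot := by
    convert h3 using 2 with g; ring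
  exact tendsto_exp_atBot.comp h4

lemma Ffun_tendsto_atTop (lam h : ℝ) :
    Tendsto (Ffun lam h) atTop (𝓝 1) := by
  have h1 : Tendsto (fun g : ℝ => rexp (-g)) atTop (𝓝 0) :=
    tendsto_exp_atBot.comp tendsto_neg_atTop_atBot
  have h2 : Tendsto (fun g : ℝ => max (rexp (-g)) (rexp (-h))) atTop (𝓝 (rexp (-h))) := by
    have := h1.max (tendsto_const_nhds (x := rexp (-h)) (f := atTop))
    rwa [max_eq_right (exp_pos _).le] at this
  have h3 : Tendsto (fun g : ℝ => lam * (rexp (-h) - max (rexp (-g)) (rexp (-h)))) atTop (𝓝 0) := by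
    have := ((tendsto_const_nhds (x := rexp (-h)) (f := atTop)).sub h2).const_mul lam
    simpa using this
  have h4 := (Real.continuous_exp.tendsto 0).comp h3
  rw [exp_zero] at h4
  exact h4

lemma F_measure_Iic (lam h : ℝ) (hl : 0 < lam) (g : ℝ) :
    (F lam h hl.le).measure (Iic g) = ENNReal.ofReal (Ffun lam h g) := by
  rw [StieltjesFunction.measure_Iic _ (Ffun_tendsto_atBot hl h), sub_zero]; rfl

lemma F_measure_univ (lam h : ℝ) (hl : 0 < lam) :
    (F lam h hl.le).measure univ = 1 := by
  rw [StieltjesFunction.measure_univ _ (Ffun_tendsto_atBot hl h) (Ffun_tendsto_atTop lam h)]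
  simp

lemma measurable_F_measure (lam : ℝ) (hl : 0 < lam) :
    Measurable (fun h => (F lam h hl.le).measure) := by
  refine Measure.measurable_of_measurable_coe _ (fun s hs => ?_)
  refine MeasurableSpace.induction_on_inter
    (C := fun s _ => Measurable fun h => (F lam h hl.le).measure s)
    (borel_eq_generateFrom_Iic ℝ ▸ (BorelSpace.measurable_eq (α := ℝ))) isPiSystem_Iic
    (show Measurable fun h : ℝ => (F lam h hl.le).measure ∅ by simp) ?_ ?_ ?_ s hs
  · rintro t ⟨g, rfl⟩
    show Measurable fun h => (F lam h hl.le).measure (Iic g)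
    have heq : (fun h => (F lam h hl.le).measure (Iic g))
        = fun h => ENNReal.ofReal (Ffun lam h g) := funext fun h => F_measure_Iic lam h hl g
    rw [heq]
    exact ENNReal.measurable_ofReal.comp (Ffun_cont_h lam g).measurable
  · intro t htm hct
    show Measurable fun h => (F lam h hl.le).measure tᶜ
    have : ∀ h : ℝ, (F lam h hl.le).measure tᶜ = 1 - (F lam h hl.le).measure t := by
      intro h
      rw [measure_compl htm (ne_top_of_le_ne_top (by simp [F_measure_univ lam h hl])
        (measure_mono (subset_univ t))), F_measure_univ lam h hl]
    simp only [this]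
    exact Measurable.const_sub hct 1
  · intro f hdisj hfm hcf
    show Measurable fun h => (F lam h hl.le).measure (⋃ i, f i)
    have : ∀ h : ℝ, (F lam h hl.le).measure (⋃ i, f i) = ∑' i, (F lam h hl.le).measure (f i) :=
      fun h => measure_iUnion hdisj hfm
    simp only [this]
    exact Measurable.ennreal_tsum hcf

/-- Kernel of truncated Gumbel measures. -/
noncomputable def ker (lam : ℝ) (hl : 0 < lam) : Kernel ℝ ℝ :=
  ⟨fun h => (F lam h hl.le).measure, measurable_F_measure lam hl⟩

lemma ker_apply (lam : ℝ) (hl : 0 < lam) (h : ℝ) :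
    ker lam hl h = (F lam h hl.le).measure := rfl

instance (lam : ℝ) (hl : 0 < lam) : IsMarkovKernel (ker lam hl) :=
  ⟨fun h => ⟨F_measure_univ lam h hl⟩⟩


lemma expMeasure_Iic {lam : ℝ} (hlam : 0 < lam) (c : ℝ) :
    expMeasure lam (Iic c) = ENNReal.ofReal (if 0 ≤ c then 1 - rexp (-(lam * c)) else 0) := by
  rw [expMeasure, gammaMeasure, withDensity_apply _ measurableSet_Iic]
  exact lintegral_exponentialPDF_eq_antiDeriv hlam c

lemma map_eq_expMeasure {Ω : Type*} [MeasureSpace Ω] [IsProbabilityMeasure (ℙ : Measure Ω)]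
    {E : Ω → ℝ} (hm : Measurable E) {lam : ℝ} (hlam : 0 < lam)
    (hE : ∀ t : ℝ, 0 ≤ t → ℙ {ω | t < E ω} = ENNReal.ofReal (rexp (-(lam * t)))) :
    Measure.map E ℙ = expMeasure lam := by
  have h0 : (ℙ : Measure Ω) {ω | 0 < E ω} = 1 := by simpa using hE 0 le_rfl
  have : IsProbabilityMeasure (Measure.map E ℙ) := Measure.isProbabilityMeasure_map hm.aemeasurable
  refine Measure.ext_of_Iic _ _ (fun c => ?_)
  rw [Measure.map_apply hm measurableSet_Iic, expMeasure_Iic hlam c]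
  rcases le_or_gt 0 c with hc | hc
  · rw [if_pos hc]
    have hcompl : (E ⁻¹' Iic c) = {ω | c < E ω}ᶜ := by
      ext ω; simp [not_lt]
    rw [hcompl, measure_compl (measurableSet_lt measurable_const hm) (measure_ne_top _ _),
      hE c hc, measure_univ]
    rw [ENNReal.ofReal_sub _ (exp_pos _).le, ENNReal.ofReal_one]
  · rw [if_neg (not_le.2 hc), ENNReal.ofReal_zero]
    refine measure_mono_null (t := {ω | 0 < E ω}ᶜ)
      (fun ω (hω : E ω ≤ c) (h0ω : 0 < E ω) => absurd (hω.trans hc.le) (not_le.2 h0ω)) ?_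
    rw [measure_compl (measurableSet_lt measurable_const hm) (measure_ne_top _ _), h0,
      measure_univ, tsub_self]

lemma expMeasure_Ici {lam : ℝ} (hlam : 0 < lam) (u : ℝ) :
    expMeasure lam (Ici u) = ENNReal.ofReal (rexp (-(lam * max u 0))) := by
  have : IsProbabilityMeasure (expMeasure lam) := isProbabilityMeasure_expMeasure hlam
  have hsing : expMeasure lam {u} = 0 := by
    rw [expMeasure, gammaMeasure]
    exact (withDensity_absolutelyContinuous _ _) (measure_singleton u)
  have hIio : expMeasure lam (Iio u) = expMeasure lam (Iic u) := by
    have h1 : Iio u ∪ {u} = Iic u := by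
      ext x; simp [le_iff_lt_or_eq]
    refine le_antisymm (measure_mono Iio_subset_Iic_self) ?_
    calc expMeasure lam (Iic u) = expMeasure lam (Iio u ∪ {u}) := by rw [h1]
      _ ≤ expMeasure lam (Iio u) + expMeasure lam {u} := measure_union_le _ _
      _ = expMeasure lam (Iio u) := by rw [hsing, add_zero]
  have h2 : expMeasure lam (Ici u) = 1 - expMeasure lam (Iio u) := by
    have h3 : Ici u = (Iio u)ᶜ := (compl_Iio (a := u)).symm
    rw [h3, measure_compl measurableSet_Iio (measure_ne_top _ _), measure_univ]
  rw [h2, hIio, expMeasure_Iic hlam u]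
  rcases le_or_gt 0 u with hu | hu
  · rw [if_pos hu, max_eq_left hu,
      ENNReal.ofReal_sub _ (exp_pos _).le, ENNReal.ofReal_one, ENNReal.sub_sub_cancel
        ENNReal.one_ne_top (ENNReal.ofReal_le_one.2 (exp_le_one_iff.2 (by simp; positivity)))]
  · rw [if_neg (not_le.2 hu), max_eq_right hu.le, ENNReal.ofReal_zero, tsub_zero, mul_zero,
      neg_zero, exp_zero, ENNReal.ofReal_one]


lemma ae_pos_of_prob_eq_one {Ω : Type*} [MeasureSpace Ω] [IsProbabilityMeasure (ℙ : Measure Ω)]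
    {E : Ω → ℝ} (hm : Measurable E) (h1 : ℙ {ω | 0 < E ω} = 1) :
    ∀ᵐ ω ∂(ℙ : Measure Ω), 0 < E ω := by
  rw [ae_iff]
  have : {ω | ¬ 0 < E ω} = {ω | 0 < E ω}ᶜ := rfl
  rw [this, measure_compl (measurableSet_lt measurable_const hm) (measure_ne_top _ _), h1,
    measure_univ, tsub_self]

end TruncGumbelAux

open TruncGumbelAux

/-- **Truncated-Gumbel chain rule for partial sums of exponentials.**
Let `E1, E2` be independent exponentials with rates `lam1, lam2 > 0`, and set
`G1 = -log E1`, `G2 = -log (E1 + E2)`.  Then `G1` is Gumbel with location `log lam1`,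
`G2 ≤ G1` almost surely, and the conditional distribution of `G2` given `G1 = h` is a
Gumbel with location `log lam2` truncated to `(-∞, h]`, namely `P(G2 ≤ g | G1 = h)` equals
`exp (-exp (-(g - log lam2)) + exp (-(h - log lam2)))` for `g ≤ h` and `1` for `g > h`. -/
theorem neg_log_partial_sums_truncated_gumbel
    {Ω : Type*} [MeasureSpace Ω] [IsProbabilityMeasure (ℙ : Measure Ω)]
    (E1 E2 : Ω → ℝ) (h1meas : Measurable E1) (h2meas : Measurable E2)
    (lam1 lam2 : ℝ) (hlam1 : 0 < lam1) (hlam2 : 0 < lam2)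
    (hindep : IndepFun E1 E2 ℙ)
    (hE1 : ∀ t : ℝ, 0 ≤ t → ℙ {ω | t < E1 ω} = ENNReal.ofReal (Real.exp (-(lam1 * t))))
    (hE2 : ∀ t : ℝ, 0 ≤ t → ℙ {ω | t < E2 ω} = ENNReal.ofReal (Real.exp (-(lam2 * t)))) :
    -- G1 = -log E1 is Gumbel with location log lam1
    (∀ g : ℝ, ℙ {ω | -Real.log (E1 ω) ≤ g} =
      ENNReal.ofReal (Real.exp (-Real.exp (-(g - Real.log lam1))))) ∧
    -- G2 = -log (E1 + E2) ≤ G1 almost surely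
    (∀ᵐ ω ∂(ℙ : Measure Ω), -Real.log (E1 ω + E2 ω) ≤ -Real.log (E1 ω)) ∧
    -- conditionally on G1 = h, G2 is a Gumbel with location log lam2 truncated to (-∞, h]
    (∀ᵐ h ∂(Measure.map (fun ω => -Real.log (E1 ω)) (ℙ : Measure Ω)),
      ∀ g : ℝ,
        condDistrib (fun ω => -Real.log (E1 ω + E2 ω))
            (fun ω => -Real.log (E1 ω)) ℙ h (Set.Iic g) =
          ENNReal.ofReal (if g ≤ h then
              Real.exp (-Real.exp (-(g - Real.log lam2)) +
                Real.exp (-(h - Real.log lam2)))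
            else 1)) := by

  have hm1 : Measure.map E1 ℙ = expMeasure lam1 := map_eq_expMeasure h1meas hlam1 hE1
  have hm2 : Measure.map E2 ℙ = expMeasure lam2 := map_eq_expMeasure h2meas hlam2 hE2
  have h0₁ : ∀ᵐ ω ∂(ℙ : Measure Ω), 0 < E1 ω :=
    ae_pos_of_prob_eq_one h1meas (by simpa using hE1 0 le_rfl)
  have h0₂ : ∀ᵐ ω ∂(ℙ : Measure Ω), 0 < E2 ω :=
    ae_pos_of_prob_eq_one h2meas (by simpa using hE2 0 le_rfl)
  set G1 : Ω → ℝ := fun ω => -Real.log (E1 ω) with hG1def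
  set G2 : Ω → ℝ := fun ω => -Real.log (E1 ω + E2 ω) with hG2def
  have hG1m : Measurable G1 := Real.measurable_log.comp h1meas |>.neg
  have hG2m : Measurable G2 := Real.measurable_log.comp (h1meas.add h2meas) |>.neg
  refine ⟨?_, ?_, ?_⟩
  · -- Part 1
    intro g
    have hae : {ω | G1 ω ≤ g} =ᵐ[ℙ] {ω | rexp (-g) ≤ E1 ω} := by
      rw [eventuallyEq_set]
      filter_upwards [h0₁] with ω hω
      simp only [mem_setOf_eq, hG1def]
      rw [neg_le, ← Real.le_log_iff_exp_le hω]
    rw [measure_congr hae,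
      show {ω | rexp (-g) ≤ E1 ω} = E1 ⁻¹' Ici (rexp (-g)) from rfl,
      ← Measure.map_apply h1meas measurableSet_Ici, hm1, expMeasure_Ici hlam1,
      max_eq_left (exp_pos _).le]
    congr 2
    rw [show -(g - Real.log lam1) = Real.log lam1 + -g by ring, Real.exp_add,
      Real.exp_log hlam1]
  · -- Part 2
    filter_upwards [h0₁, h0₂] with ω h1 h2
    have := Real.log_le_log h1 (by linarith : E1 ω ≤ E1 ω + E2 ω)
    linarith
  · -- Part 3
    set ρ : Measure (ℝ × ℝ) := Measure.map (fun ω => (G1 ω, G2 ω)) ℙ with hρdef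
    have hρfst : ρ.fst = Measure.map G1 ℙ := Measure.fst_map_prodMk hG2m
    haveI : IsProbabilityMeasure ρ := Measure.isProbabilityMeasure_map (hG1m.prodMk hG2m).aemeasurable
    haveI : IsProbabilityMeasure (Measure.map G1 ℙ) := Measure.isProbabilityMeasure_map hG1m.aemeasurable
    set κ : Kernel ℝ ℝ := ker lam2 hlam2 with hκdef
    haveI : IsProbabilityMeasure (expMeasure lam1) := isProbabilityMeasure_expMeasure hlam1
    haveI : IsProbabilityMeasure (expMeasure lam2) := isProbabilityMeasure_expMeasure hlam2
    have hcomp : ρ = ρ.fst ⊗ₘ κ := by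
      rw [hρfst]
      have hspan : IsCountablySpanning (range (Iic : ℝ → Set ℝ)) := by
        refine ⟨fun n => Iic (n : ℝ), fun n => mem_range_self _, ?_⟩
        ext x
        simp only [mem_iUnion, mem_Iic, mem_univ, iff_true]
        exact exists_nat_ge x
      refine ext_of_generate_finite (image2 (· ×ˢ ·) (range Iic) (range Iic)) ?_
        (isPiSystem_Iic.prod isPiSystem_Iic) ?_ (by simp)
      · calc (inferInstance : MeasurableSpace (ℝ × ℝ))
            = Real.measurableSpace.prod Real.measurableSpace := rfl
          _ = MeasurableSpace.generateFrom (image2 (· ×ˢ ·) (range Iic) (range Iic)) := by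
              rw [BorelSpace.measurable_eq (α := ℝ), borel_eq_generateFrom_Iic ℝ]
              exact generateFrom_prod_eq hspan hspan
      · rintro s ⟨s1, ⟨h, rfl⟩, s2, ⟨g, rfl⟩, rfl⟩
        have hS : MeasurableSet {p : ℝ × ℝ | rexp (-h) ≤ p.1 ∧ rexp (-g) ≤ p.1 + p.2} :=
          (measurableSet_le measurable_const measurable_fst).inter
            (measurableSet_le measurable_const (measurable_fst.add measurable_snd))
        -- LHS
        rw [hρdef, Measure.map_apply (hG1m.prodMk hG2m)
          (measurableSet_Iic.prod measurableSet_Iic)]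
        have hae2 : ((fun ω => (G1 ω, G2 ω)) ⁻¹' (Iic h ×ˢ Iic g)) =ᵐ[ℙ]
            ((fun ω => (E1 ω, E2 ω)) ⁻¹'
              {p : ℝ × ℝ | rexp (-h) ≤ p.1 ∧ rexp (-g) ≤ p.1 + p.2}) := by
          rw [eventuallyEq_set]
          filter_upwards [h0₁, h0₂] with ω hω1 hω2
          simp only [mem_preimage, mem_prod, mem_Iic, mem_setOf_eq, hG1def, hG2def]
          have c1 : -Real.log (E1 ω) ≤ h ↔ rexp (-h) ≤ E1 ω := by
            rw [neg_le, ← Real.le_log_iff_exp_le hω1]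
          have c2 : -Real.log (E1 ω + E2 ω) ≤ g ↔ rexp (-g) ≤ E1 ω + E2 ω := by
            rw [neg_le, ← Real.le_log_iff_exp_le (by linarith : (0:ℝ) < E1 ω + E2 ω)]
          exact and_congr c1 c2
        rw [measure_congr hae2, ← Measure.map_apply (h1meas.prodMk h2meas) hS]
        have hjoint : Measure.map (fun ω => (E1 ω, E2 ω)) ℙ
            = (expMeasure lam1).prod (expMeasure lam2) := by
          rw [← hm1, ← hm2]
          exact (indepFun_iff_map_prod_eq_prod_map_map h1meas.aemeasurable
            h2meas.aemeasurable).1 hindep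
        rw [hjoint, Measure.prod_apply hS]
        have hlhs : ∀ x : ℝ, expMeasure lam2
            (Prod.mk x ⁻¹' {p : ℝ × ℝ | rexp (-h) ≤ p.1 ∧ rexp (-g) ≤ p.1 + p.2})
            = (Ici (rexp (-h))).indicator
              (fun x => ENNReal.ofReal (rexp (-(lam2 * max (rexp (-g) - x) 0)))) x := by
          intro x
          have hpre1 : (Prod.mk x ⁻¹'
              {p : ℝ × ℝ | rexp (-h) ≤ p.1 ∧ rexp (-g) ≤ p.1 + p.2})
              = if rexp (-h) ≤ x then Ici (rexp (-g) - x) else ∅ := by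
            split_ifs with hx
            · ext y
              simp only [mem_preimage, mem_setOf_eq, mem_Ici]
              constructor
              · rintro ⟨-, hy⟩; linarith
              · intro hy; exact ⟨hx, by linarith⟩
            · ext y
              simp only [mem_preimage, mem_setOf_eq, mem_empty_iff_false, iff_false, not_and]
              intro h1; exact absurd h1 hx
          rw [hpre1]
          by_cases hx : rexp (-h) ≤ x
          · rw [if_pos hx, indicator_of_mem (mem_Ici.2 hx), expMeasure_Ici hlam2]
          · rw [if_neg hx, indicator_of_notMem (fun c => hx (mem_Ici.1 c)), measure_empty]
        simp only [hlhs]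
        rw [lintegral_indicator measurableSet_Ici]
        -- RHS
        rw [Measure.compProd_apply (measurableSet_Iic.prod measurableSet_Iic)]
        have hrhs : ∀ x : ℝ, κ x (Prod.mk x ⁻¹' (Iic h ×ˢ Iic g))
            = (Iic h).indicator (fun x => ENNReal.ofReal (Ffun lam2 x g)) x := by
          intro x
          rw [mk_preimage_prod_right_eq_if]
          by_cases hx : x ∈ Iic h
          · rw [if_pos hx, indicator_of_mem hx, hκdef, ker_apply, F_measure_Iic _ _ hlam2]
          · rw [if_neg hx, indicator_of_notMem hx, measure_empty]
        simp only [hrhs]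
        rw [lintegral_indicator measurableSet_Iic]
        have hmapG1 : Measure.map G1 ℙ = (expMeasure lam1).map (fun y => -Real.log y) := by
          rw [← hm1, Measure.map_map (g := fun y => -Real.log y) (Real.measurable_log.neg) h1meas]; rfl
        rw [hmapG1, setLIntegral_map (g := fun y => -Real.log y) measurableSet_Iic
          (show Measurable fun x : ℝ => ENNReal.ofReal (Ffun lam2 x g) from
            ENNReal.measurable_ofReal.comp ((Ffun_cont_h lam2 g).measurable))
          (Real.measurable_log.neg)]
        -- both are integrals w.r.t. expMeasure lam1; pass to volume via withDensity
        have hexp1 : expMeasure lam1 = volume.withDensity (exponentialPDF lam1) := rfl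
        have hA : MeasurableSet ((fun y : ℝ => -Real.log y) ⁻¹' Iic h) :=
          (Real.measurable_log.neg) measurableSet_Iic
        have hf1 : Measurable fun x : ℝ =>
            ENNReal.ofReal (rexp (-(lam2 * max (rexp (-g) - x) 0))) := by fun_prop
        have hf2 : Measurable fun x : ℝ => ENNReal.ofReal (Ffun lam2 (-Real.log x) g) := by
          exact ENNReal.measurable_ofReal.comp
            ((Ffun_cont_h lam2 g).measurable.comp (Real.measurable_log.neg))
        rw [← lintegral_indicator measurableSet_Ici, ← lintegral_indicator hA, hexp1,
          lintegral_withDensity_eq_lintegral_mul _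
            (show Measurable (exponentialPDF lam1) from
              (measurable_exponentialPDFReal lam1).ennreal_ofReal)
            (hf1.indicator measurableSet_Ici),
          lintegral_withDensity_eq_lintegral_mul _
            (show Measurable (exponentialPDF lam1) from
              (measurable_exponentialPDFReal lam1).ennreal_ofReal)
            (hf2.indicator hA)]
        refine lintegral_congr_ae ?_
        have h0ae : ∀ᵐ (y : ℝ) ∂volume, y ≠ (0:ℝ) := by
          rw [ae_iff]
          simpa using measure_singleton (0:ℝ)
        filter_upwards [h0ae] with x hx0
        simp only [Pi.mul_apply]
        rcases hx0.lt_or_gt with hx | hx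
        · rw [show exponentialPDF lam1 x = 0 from exponentialPDF_of_neg hx, zero_mul, zero_mul]
        · have hmem : (x ∈ (fun y : ℝ => -Real.log y) ⁻¹' Iic h) ↔ x ∈ Ici (rexp (-h)) := by
            simp only [mem_preimage, mem_Iic, mem_Ici]
            rw [neg_le, ← Real.le_log_iff_exp_le hx]
          congr 1
          by_cases hmem2 : x ∈ Ici (rexp (-h))
          · rw [indicator_of_mem hmem2, indicator_of_mem (hmem.2 hmem2)]
            congr 1
            unfold Ffun
            rw [neg_neg, Real.exp_log hx]
            congr 1
            have hmax : max (rexp (-g) - x) 0 = max (rexp (-g)) x - x := by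
              rw [← max_sub_sub_right, sub_self]
            rw [hmax]
            ring
          · rw [indicator_of_notMem hmem2,
              indicator_of_notMem (fun c => hmem2 (hmem.1 c))]
    have huniq := ProbabilityTheory.eq_condKernel_of_measure_eq_compProd κ hcomp
    rw [hρfst] at huniq
    have hcd : condDistrib G2 G1 ℙ = ρ.condKernel := by rw [condDistrib_def]
    filter_upwards [huniq] with h hh g
    rw [hcd, ← hh, hκdef, ker_apply, F_measure_Iic _ _ hlam2]
    congr 1
    unfold Ffun
    split_ifs with hgh
    · rw [max_eq_left (exp_le_exp.2 (by linarith))]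
      have e1 : rexp (-(g - Real.log lam2)) = lam2 * rexp (-g) := by
        rw [show -(g - Real.log lam2) = Real.log lam2 + -g by ring, Real.exp_add,
          Real.exp_log hlam2]
      have e2 : rexp (-(h - Real.log lam2)) = lam2 * rexp (-h) := by
        rw [show -(h - Real.log lam2) = Real.log lam2 + -h by ring, Real.exp_add,
          Real.exp_log hlam2]
      rw [e1, e2]
      ring_nf
    · rw [max_eq_right (exp_le_exp.2 (by linarith)), sub_self, mul_zero, exp_zero]
end
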